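/- arXiv:1507.02886 — 11 statements merged into one kernel-verified Lean document; each statement's English description precedes it below -/
import Mathlib

section
/- In the category of monoids, the class of weakly Schreier split epimorphisms is stable under pullback: if (f,s): X ⇄ Y is a split epimorphism of monoids such that for every y ∈ Y the map μ_y : Ker f → f⁻¹(y) given by μ_y(k) = k·s(y) is surjective, then any pullback of (f,s) along a monoid homomorphism g : Y' → Y again has this property. -/
/-- In `Mon`, weakly Schreier split epimorphisms are stable under pullback.
`(f,s)` is a weakly Schreier split epimorphism and `(P, f', pX, s')` is (up to isomorphism)
the pullback of `(f,s)` along `g`, presented by its projections, the induced section,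
joint injectivity and the universal surjectivity onto compatible pairs.  Then `(f',s')`
is again weakly Schreier. -/
theorem weaklySchreier_stable_under_pullback
    {X Y Y' : Type*} [Monoid X] [Monoid Y] [Monoid Y']
    (f : X →* Y) (s : Y →* X) (hs : ∀ y, f (s y) = y)
    (hws : ∀ x : X, ∃ k : X, f k = 1 ∧ x = k * s (f x))
    (g : Y' →* Y)
    (P : Type*) [Monoid P] (f' : P →* Y') (pX : P →* X) (s' : Y' →* P)
    (hcomm : ∀ p, g (f' p) = f (pX p))
    (hs'1 : ∀ y', f' (s' y') = y')
    (hs'2 : ∀ y', pX (s' y') = s (g y'))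
    (hmono : ∀ p q : P, f' p = f' q → pX p = pX q → p = q)
    (hsurj : ∀ (y' : Y') (x : X), g y' = f x → ∃ p : P, f' p = y' ∧ pX p = x) :
    ∀ p : P, ∃ k : P, f' k = 1 ∧ p = k * s' (f' p) := by
  intro p
  obtain ⟨k, hk1, hk2⟩ := hws (pX p)
  obtain ⟨kp, hkp1, hkp2⟩ := hsurj 1 k (by simp [hk1])
  refine ⟨kp, hkp1, hmono _ _ ?_ ?_⟩
  · simp [hkp1, hs'1]
  · simp [hkp2, hs'2, hcomm, ← hk2]
end

section
/- In the category of monoids, given a pullback of split epimorphisms where (f,s) : X ⇄ Y is weakly Schreier, the pair consisting of the section s' : Y' → Y'×_Y X of the pulled-back split epimorphism and the induced section t̄ : X → Y'×_Y X (coming from a splitting t of g) is jointly extremally epic: the only submonoid of Y'×_Y X containing both s'(Y') and t̄(X) is Y'×_Y X itself. -/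
/-- In `Mon`, given a pullback of split epimorphisms where `(f,s)` is weakly Schreier,
the pair of induced sections `s' : Y' → Y'×_Y X` and `t̄ : X → Y'×_Y X` is jointly
extremally epic: the only submonoid of `Y'×_Y X` containing both images is everything. -/
theorem weaklySchreier_jointly_extremally_epic
    {X Y Y' : Type*} [Monoid X] [Monoid Y] [Monoid Y']
    (f : X →* Y) (s : Y →* X) (hs : ∀ y, f (s y) = y)
    (hws : ∀ x : X, ∃ k : X, f k = 1 ∧ x = k * s (f x))
    (g : Y' →* Y) (t : Y →* Y') (ht : ∀ y, g (t y) = y)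
    (P : Submonoid (Y' × X))
    (hP : ∀ p : Y' × X, p ∈ P ↔ g p.1 = f p.2)
    (W : Submonoid P)
    (hW1 : ∀ y' : Y', (⟨(y', s (g y')), (hP _).mpr (hs (g y')).symm⟩ : P) ∈ W)
    (hW2 : ∀ x : X, (⟨(t (f x), x), (hP _).mpr (ht (f x))⟩ : P) ∈ W) :
    W = ⊤ := by
  ext ⟨⟨y', x⟩, hyx⟩
  simp only [Submonoid.mem_top, iff_true]
  have hgf : g y' = f x := (hP _).mp hyx
  obtain ⟨k, hk1, hkx⟩ := hws x
  have key : (⟨(y', x), hyx⟩ : P) =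
      (⟨(t (f k), k), (hP _).mpr (ht (f k))⟩ : P) *
      (⟨(y', s (g y')), (hP _).mpr (hs (g y')).symm⟩ : P) := by
    apply Subtype.ext
    show (y', x) = (t (f k) * y', k * s (g y'))
    rw [hk1, map_one, one_mul, hgf, ← hkx]
  rw [key]
  exact W.mul_mem (hW2 k) (hW1 y')
end

section
/- Let E be a finitely complete category with a fibrational class Σ of split epimorphisms, making E a Σ-Mal'tsev category. Then any reflexive relation R on an object X whose underlying split epimorphism (d₀, s₀) belongs to Σ is transitive, and if moreover R is symmetric then R is an equivalence relation. -/
open CategoryTheory CategoryTheory.Limits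

universe v u

variable {C : Type u} [Category.{v} C]

/-- A pair of morphisms with common codomain is jointly extremally epic if any monomorphism
through which both factor is an isomorphism. -/
def JointlyExtremallyEpic {A B Z : C} (a : A ⟶ Z) (b : B ⟶ Z) : Prop :=
  ∀ ⦃M : C⦄ (m : M ⟶ Z), Mono m → ∀ (a' : A ⟶ M) (b' : B ⟶ M),
    a' ≫ m = a → b' ≫ m = b → IsIso m

/-- A class of split epimorphisms (with chosen splittings). -/
abbrev SigClass (C : Type u) [Category.{v} C] : Type _ :=
  ∀ ⦃X Y : C⦄, (X ⟶ Y) → (Y ⟶ X) → Prop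

/-- The class is fibrational: stable under pullback and containing the isomorphisms. -/
def Fibrational (Sig : SigClass C) : Prop :=
  (∀ ⦃X Y X' Y' : C⦄ (f : X ⟶ Y) (s : Y ⟶ X) (f' : X' ⟶ Y') (s' : Y' ⟶ X')
      (g : Y' ⟶ Y) (gbar : X' ⟶ X),
      IsPullback gbar f' f g → s ≫ f = 𝟙 Y → s' ≫ f' = 𝟙 Y' → s' ≫ gbar = g ≫ s →
      Sig f s → Sig f' s') ∧
  (∀ ⦃X Y : C⦄ (f : X ⟶ Y) (s : Y ⟶ X), IsIso f → s ≫ f = 𝟙 Y → Sig f s)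

/-- `C` is a `Σ`-Mal'tsev category: in any pullback of a split epimorphism `(f,s)` of the
class along a split epimorphism `(g,t)`, the pair of induced sections is jointly extremally
epic. -/
def SigmaMaltsev (Sig : SigClass C) : Prop :=
  ∀ ⦃X Y X' Y' : C⦄ (f : X ⟶ Y) (s : Y ⟶ X) (f' : X' ⟶ Y') (s' : Y' ⟶ X')
    (g : Y' ⟶ Y) (t : Y ⟶ Y') (gbar : X' ⟶ X) (tbar : X ⟶ X'),
    s ≫ f = 𝟙 Y → s' ≫ f' = 𝟙 Y' → t ≫ g = 𝟙 Y → tbar ≫ gbar = 𝟙 X →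
    IsPullback gbar f' f g → s' ≫ gbar = g ≫ s → tbar ≫ f' = f ≫ t →
    Sig f s → JointlyExtremallyEpic s' tbar

/-- An internal reflexive relation on `X`. -/
structure ReflRel (X : C) where
  R : C
  d0 : R ⟶ X
  d1 : R ⟶ X
  s0 : X ⟶ R
  jm : ∀ ⦃Z : C⦄ (a b : Z ⟶ R), a ≫ d0 = b ≫ d0 → a ≫ d1 = b ≫ d1 → a = b
  r0 : s0 ≫ d0 = 𝟙 X
  r1 : s0 ≫ d1 = 𝟙 X

def ReflRel.Symm {X : C} (R : ReflRel X) : Prop :=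
  ∃ σ : R.R ⟶ R.R, σ ≫ R.d0 = R.d1 ∧ σ ≫ R.d1 = R.d0

def ReflRel.Trans [HasPullbacks C] {X : C} (R : ReflRel X) : Prop :=
  ∃ t : pullback R.d1 R.d0 ⟶ R.R,
    t ≫ R.d0 = pullback.fst R.d1 R.d0 ≫ R.d0 ∧
    t ≫ R.d1 = pullback.snd R.d1 R.d0 ≫ R.d1

def ReflRel.IsEquiv [HasPullbacks C] {X : C} (R : ReflRel X) : Prop :=
  R.Symm ∧ R.Trans

/-- A connector for a pair of reflexive relations, satisfying the Mal'tsev identities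
`p(xRxSy) = y` and `p(xRySy) = x`. -/
def IsConnector [HasPullbacks C] {X : C} (R S : ReflRel X) (p : pullback R.d1 S.d0 ⟶ X) : Prop :=
  pullback.lift (S.d0 ≫ R.s0) (𝟙 S.R) (by simp [R.r1]) ≫ p = S.d1 ∧
  pullback.lift (𝟙 R.R) (R.d1 ≫ S.s0) (by simp [S.r0]) ≫ p = R.d0

/-- `[R,S] = 0` : the pair of reflexive relations admits a connector. -/
def Centralize [HasPullbacks C] {X : C} (R S : ReflRel X) : Prop :=
  ∃ p, IsConnector R S p

/-- The kernel relation of a morphism. -/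
noncomputable def kerRel [HasPullbacks C] {A B : C} (f : A ⟶ B) : ReflRel A where
  R := pullback f f
  d0 := pullback.fst f f
  d1 := pullback.snd f f
  s0 := pullback.lift (𝟙 A) (𝟙 A) rfl
  jm := fun _ a b h0 h1 => pullback.hom_ext h0 h1
  r0 := pullback.lift_fst _ _ _
  r1 := pullback.lift_snd _ _ _
/-- In a `Σ`-Mal'tsev category any `Σ`-reflexive relation is transitive, and any symmetric
`Σ`-relation is an equivalence relation. -/
theorem sigma_relation_transitive [HasFiniteLimits C] (Sig : SigClass C)
    (hfib : Fibrational Sig) (hmal : SigmaMaltsev Sig)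
    {X : C} (R : ReflRel X) (hR : Sig R.d0 R.s0) :
    R.Trans ∧ (R.Symm → R.IsEquiv) := by
  have htrans : R.Trans := by
    set P := pullback R.d1 R.d0 with hP
    set fst := pullback.fst R.d1 R.d0
    set snd := pullback.snd R.d1 R.d0
    have hpbcond : fst ≫ R.d1 = snd ≫ R.d0 := pullback.condition
    -- the two induced sections
    have hs'cond : 𝟙 R.R ≫ R.d1 = (R.d1 ≫ R.s0) ≫ R.d0 := by
      simp [Category.assoc, R.r0]
    set s' : R.R ⟶ P := pullback.lift (𝟙 R.R) (R.d1 ≫ R.s0) hs'cond with hs'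
    have htbcond : (R.d0 ≫ R.s0) ≫ R.d1 = 𝟙 R.R ≫ R.d0 := by
      simp [Category.assoc, R.r1]
    set tbar : R.R ⟶ P := pullback.lift (R.d0 ≫ R.s0) (𝟙 R.R) htbcond with htb
    -- the Mal'tsev axiom
    have hpb : IsPullback snd fst R.d0 R.d1 :=
      (IsPullback.of_hasPullback R.d1 R.d0).flip
    have hjee : JointlyExtremallyEpic s' tbar := by
      refine hmal R.d0 R.s0 fst s' R.d1 R.s0 snd tbar R.r0 ?_ R.r1 ?_ hpb ?_ ?_ hR
      · simp [hs', fst, pullback.lift_fst, pullback.lift_snd, prod.lift_fst, prod.lift_snd]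
      · simp [htb, snd, pullback.lift_fst, pullback.lift_snd, prod.lift_fst, prod.lift_snd]
      · simp [hs', snd, pullback.lift_fst, pullback.lift_snd, prod.lift_fst, prod.lift_snd]
      · simp [htb, fst, pullback.lift_fst, pullback.lift_snd, prod.lift_fst, prod.lift_snd]
    -- the object of "coherent triples"
    set q1 : P ⨯ R.R ⟶ X := prod.fst ≫ fst ≫ R.d0
    set q2 : P ⨯ R.R ⟶ X := prod.snd ≫ R.d0
    set E := equalizer q1 q2 with hE
    set i1 : E ⟶ P ⨯ R.R := equalizer.ι q1 q2
    have hi1 : i1 ≫ q1 = i1 ≫ q2 := equalizer.condition q1 q2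
    set r1 : E ⟶ X := i1 ≫ prod.fst ≫ snd ≫ R.d1
    set r2 : E ⟶ X := i1 ≫ prod.snd ≫ R.d1
    set M := equalizer r1 r2 with hM
    set i2 : M ⟶ E := equalizer.ι r1 r2
    have hi2 : i2 ≫ r1 = i2 ≫ r2 := equalizer.condition r1 r2
    set m : M ⟶ P := i2 ≫ i1 ≫ prod.fst
    set w : M ⟶ R.R := i2 ≫ i1 ≫ prod.snd
    -- key identities
    have hw0 : w ≫ R.d0 = m ≫ fst ≫ R.d0 := by
      have := congrArg (fun h => i2 ≫ h) hi1
      simpa [q1, q2, m, w, Category.assoc] using this.symm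
    have hw1 : w ≫ R.d1 = m ≫ snd ≫ R.d1 := by
      simpa [r1, r2, m, w, Category.assoc] using hi2.symm
    -- m is a monomorphism
    have hmono : Mono m := by
      constructor
      intro Z a b hab
      have hP1 : a ≫ i2 ≫ i1 ≫ prod.fst = b ≫ i2 ≫ i1 ≫ prod.fst := by
        simpa [m, Category.assoc] using hab
      have hW : a ≫ w = b ≫ w := by
        apply R.jm
        · have := congrArg (fun h => h ≫ fst ≫ R.d0) hab
          simp only [Category.assoc] at this
          simp only [w, Category.assoc, ← hw0] at this ⊢
          simpa [m, Category.assoc] using this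
        · have := congrArg (fun h => h ≫ snd ≫ R.d1) hab
          simp only [Category.assoc] at this
          simp only [w, Category.assoc, ← hw1] at this ⊢
          simpa [m, Category.assoc] using this
      have hE1 : a ≫ i2 ≫ i1 = b ≫ i2 ≫ i1 := by
        apply Limits.prod.hom_ext
        · simpa [Category.assoc] using hP1
        · simpa [w, Category.assoc] using hW
      have hE2 : a ≫ i2 = b ≫ i2 := by
        have : (a ≫ i2) ≫ i1 = (b ≫ i2) ≫ i1 := by
          simpa [Category.assoc] using hE1
        exact (cancel_mono i1).mp this
      exact (cancel_mono i2).mp hE2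
    -- factor s' through m
    have hs'E : (prod.lift s' (𝟙 R.R)) ≫ q1 = (prod.lift s' (𝟙 R.R)) ≫ q2 := by
      simp [q1, q2, s', fst, Category.assoc, pullback.lift_fst, pullback.lift_snd, prod.lift_fst, prod.lift_snd, prod.lift_fst_assoc, prod.lift_snd_assoc, pullback.lift_fst_assoc]
    have hs'M : (equalizer.lift _ hs'E) ≫ r1 = (equalizer.lift _ hs'E) ≫ r2 := by
      simp only [r1, r2, i1, ← Category.assoc, equalizer.lift_ι]
      simp [s', snd, Category.assoc, R.r1, pullback.lift_fst, pullback.lift_snd, prod.lift_fst, prod.lift_snd]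
    have hfacs' : (equalizer.lift _ hs'M) ≫ m = s' := by
      simp [m, i1, i2, Category.assoc, pullback.lift_fst, pullback.lift_snd, prod.lift_fst, prod.lift_snd]
    -- factor tbar through m
    have htbE : (prod.lift tbar (𝟙 R.R)) ≫ q1 = (prod.lift tbar (𝟙 R.R)) ≫ q2 := by
      simp [q1, q2, tbar, fst, Category.assoc, R.r0, pullback.lift_fst, pullback.lift_snd, prod.lift_fst, prod.lift_snd, prod.lift_fst_assoc, prod.lift_snd_assoc, pullback.lift_fst_assoc]
    have htbM : (equalizer.lift _ htbE) ≫ r1 = (equalizer.lift _ htbE) ≫ r2 := by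
      simp only [r1, r2, i1, ← Category.assoc, equalizer.lift_ι]
      simp [tbar, snd, Category.assoc, pullback.lift_fst, pullback.lift_snd, prod.lift_fst, prod.lift_snd]
    have hfactb : (equalizer.lift _ htbM) ≫ m = tbar := by
      simp [m, i1, i2, Category.assoc, pullback.lift_fst, pullback.lift_snd, prod.lift_fst, prod.lift_snd]
    -- m is an isomorphism
    have hiso : IsIso m := hjee m hmono _ _ hfacs' hfactb
    -- define the transitivity map
    refine ⟨inv m ≫ w, ?_, ?_⟩
    · rw [Category.assoc, hw0, ← Category.assoc, IsIso.inv_hom_id, Category.id_comp]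
    · rw [Category.assoc, hw1, ← Category.assoc, IsIso.inv_hom_id, Category.id_comp]
  exact ⟨htrans, fun hs => ⟨hs, htrans⟩⟩
end

section
/- Let E be a Σ-Mal'tsev category. Then on any reflexive graph X₁ ⇉ X₀ whose split epimorphism (d₀, s₀) belongs to Σ, there is at most one internal category structure; moreover it suffices to have a composition map d₁ : X₂ → X₁ satisfying d₁ ∘ s₀ = id and d₁ ∘ s₁ = id (the incidence and associativity axioms then hold automatically). -/
open CategoryTheory CategoryTheory.Limits

universe v u

variable {C : Type u} [Category.{v} C]

/-- An internal reflexive graph. -/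
structure ReflGraph (C : Type u) [Category.{v} C] where
  X1 : C
  X0 : C
  d0 : X1 ⟶ X0
  d1 : X1 ⟶ X0
  s0 : X0 ⟶ X1
  r0 : s0 ≫ d0 = 𝟙 X0
  r1 : s0 ≫ d1 = 𝟙 X0

/-- An internal category structure on a reflexive graph: a composition on the object of
composable pairs, with units, incidence and associativity axioms. -/
structure CatStr [HasPullbacks C] (G : ReflGraph C) where
  comp : pullback G.d1 G.d0 ⟶ G.X1
  unit0 : pullback.lift (G.d0 ≫ G.s0) (𝟙 G.X1) (by simp [G.r1]) ≫ comp = 𝟙 G.X1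
  unit1 : pullback.lift (𝟙 G.X1) (G.d1 ≫ G.s0) (by simp [G.r0]) ≫ comp = 𝟙 G.X1
  incid0 : comp ≫ G.d0 = pullback.fst G.d1 G.d0 ≫ G.d0
  incid1 : comp ≫ G.d1 = pullback.snd G.d1 G.d0 ≫ G.d1
  assoc : ∀ ⦃Z : C⦄ (a b c : Z ⟶ G.X1) (hab : a ≫ G.d1 = b ≫ G.d0) (hbc : b ≫ G.d1 = c ≫ G.d0)
    (w1 : (pullback.lift a b hab ≫ comp) ≫ G.d1 = c ≫ G.d0)
    (w2 : a ≫ G.d1 = (pullback.lift b c hbc ≫ comp) ≫ G.d0),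
    pullback.lift _ c w1 ≫ comp = pullback.lift a _ w2 ≫ comp

/-- An internal groupoid structure on a reflexive graph. -/
structure GrpdStr [HasPullbacks C] (G : ReflGraph C) where
  cat : CatStr G
  inv : G.X1 ⟶ G.X1
  inv_d0 : inv ≫ G.d0 = G.d1
  inv_d1 : inv ≫ G.d1 = G.d0
  linv : pullback.lift inv (𝟙 G.X1) (by rw [inv_d1]; simp) ≫ cat.comp = G.d1 ≫ G.s0
  rinv : pullback.lift (𝟙 G.X1) inv (by rw [inv_d0]; simp) ≫ cat.comp = G.d0 ≫ G.s0

/-- A centralization data on a pair of reflexive relations: a double connecting relation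
in which the square containing `d0^S` and `d1^R` is a pullback. -/
structure CentData {X : C} (R S : ReflRel X) where
  W : C
  q0 : W ⟶ R.R
  q1 : W ⟶ R.R
  r0 : W ⟶ S.R
  r1 : W ⟶ S.R
  c00 : r0 ≫ S.d0 = q0 ≫ R.d0
  c01 : r0 ≫ S.d1 = q1 ≫ R.d0
  c10 : r1 ≫ S.d0 = q0 ≫ R.d1
  c11 : r1 ≫ S.d1 = q1 ≫ R.d1
  sR : R.R ⟶ W
  sR0 : sR ≫ q0 = 𝟙 R.R
  sR1 : sR ≫ q1 = 𝟙 R.R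
  sRr0 : sR ≫ r0 = R.d0 ≫ S.s0
  sRr1 : sR ≫ r1 = R.d1 ≫ S.s0
  sS : S.R ⟶ W
  sS0 : sS ≫ r0 = 𝟙 S.R
  sS1 : sS ≫ r1 = 𝟙 S.R
  sSq0 : sS ≫ q0 = S.d0 ≫ R.s0
  sSq1 : sS ≫ q1 = S.d1 ≫ R.s0
  pb : IsPullback r1 q0 S.d0 R.d1

attribute [simp] pullback.lift_fst pullback.lift_snd pullback.lift_fst_assoc pullback.lift_snd_assoc

/-- A jointly extremally epic pair of morphisms is jointly epic. -/
theorem jee_cancel [HasEqualizers C] {A B Z T : C} {a : A ⟶ Z} {b : B ⟶ Z}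
    (h : JointlyExtremallyEpic a b) {u v : Z ⟶ T}
    (ha : a ≫ u = a ≫ v) (hb : b ≫ u = b ≫ v) : u = v := by
  haveI : IsIso (equalizer.ι u v) :=
    h (equalizer.ι u v) inferInstance (equalizer.lift a ha) (equalizer.lift b hb)
      (equalizer.lift_ι _ _) (equalizer.lift_ι _ _)
  rw [← cancel_epi (equalizer.ι u v)]
  exact equalizer.condition u v

/-- In the pullback of a `Σ`-split epi `(f,s)` along a split epi `(g,t)`, the two canonical
sections are jointly epic. -/
theorem sections_cancel [HasFiniteLimits C] {Sig : SigClass C} (hmal : SigmaMaltsev Sig)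
    {X Y Y' : C} (f : X ⟶ Y) (s : Y ⟶ X) (g : Y' ⟶ Y) (t : Y ⟶ Y')
    (hfs : s ≫ f = 𝟙 Y) (htg : t ≫ g = 𝟙 Y) (hSig : Sig f s)
    {T : C} {u v : pullback g f ⟶ T}
    (h1 : pullback.lift (𝟙 Y') (g ≫ s)
        (by rw [Category.id_comp, Category.assoc, hfs, Category.comp_id]) ≫ u
        = pullback.lift (𝟙 Y') (g ≫ s)
        (by rw [Category.id_comp, Category.assoc, hfs, Category.comp_id]) ≫ v)
    (h2 : pullback.lift (f ≫ t) (𝟙 X)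
        (by rw [Category.id_comp, Category.assoc, htg, Category.comp_id]) ≫ u
        = pullback.lift (f ≫ t) (𝟙 X)
        (by rw [Category.id_comp, Category.assoc, htg, Category.comp_id]) ≫ v) :
    u = v := by
  have hjee := hmal f s (pullback.fst g f)
      (pullback.lift (𝟙 Y') (g ≫ s)
        (by rw [Category.id_comp, Category.assoc, hfs, Category.comp_id]))
      g t (pullback.snd g f)
      (pullback.lift (f ≫ t) (𝟙 X)
        (by rw [Category.id_comp, Category.assoc, htg, Category.comp_id]))
      hfs (by simp) htg (by simp)
      (IsPullback.of_hasPullback g f).flip (by simp) (by simp) hSig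
  exact jee_cancel hjee h1 h2

/-- In a `Σ`-Mal'tsev category, on a `Σ`-reflexive graph there is at most one internal
category structure, and a composition map satisfying the two unit axioms automatically
satisfies the incidence and associativity axioms. -/
theorem at_most_one_category_structure [HasFiniteLimits C] (Sig : SigClass C)
    (hfib : Fibrational Sig) (hmal : SigmaMaltsev Sig)
    (G : ReflGraph C) (hG : Sig G.d0 G.s0) :
    (∀ m m' : pullback G.d1 G.d0 ⟶ G.X1,
        pullback.lift (G.d0 ≫ G.s0) (𝟙 G.X1) (by simp [G.r1]) ≫ m = 𝟙 G.X1 →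
        pullback.lift (𝟙 G.X1) (G.d1 ≫ G.s0) (by simp [G.r0]) ≫ m = 𝟙 G.X1 →
        pullback.lift (G.d0 ≫ G.s0) (𝟙 G.X1) (by simp [G.r1]) ≫ m' = 𝟙 G.X1 →
        pullback.lift (𝟙 G.X1) (G.d1 ≫ G.s0) (by simp [G.r0]) ≫ m' = 𝟙 G.X1 →
        m = m') ∧
    (∀ m : pullback G.d1 G.d0 ⟶ G.X1,
        pullback.lift (G.d0 ≫ G.s0) (𝟙 G.X1) (by simp [G.r1]) ≫ m = 𝟙 G.X1 →
        pullback.lift (𝟙 G.X1) (G.d1 ≫ G.s0) (by simp [G.r0]) ≫ m = 𝟙 G.X1 →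
        (m ≫ G.d0 = pullback.fst G.d1 G.d0 ≫ G.d0 ∧
         m ≫ G.d1 = pullback.snd G.d1 G.d0 ≫ G.d1 ∧
         ∀ ⦃Z : C⦄ (a b c : Z ⟶ G.X1) (hab : a ≫ G.d1 = b ≫ G.d0)
           (hbc : b ≫ G.d1 = c ≫ G.d0)
           (w1 : (pullback.lift a b hab ≫ m) ≫ G.d1 = c ≫ G.d0)
           (w2 : a ≫ G.d1 = (pullback.lift b c hbc ≫ m) ≫ G.d0),
           pullback.lift _ c w1 ≫ m = pullback.lift a _ w2 ≫ m)) := by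
  -- joint epicity on X₂
  have key : ∀ {T : C} (u v : pullback G.d1 G.d0 ⟶ T),
      pullback.lift (𝟙 G.X1) (G.d1 ≫ G.s0) (by simp [G.r0]) ≫ u =
        pullback.lift (𝟙 G.X1) (G.d1 ≫ G.s0) (by simp [G.r0]) ≫ v →
      pullback.lift (G.d0 ≫ G.s0) (𝟙 G.X1) (by simp [G.r1]) ≫ u =
        pullback.lift (G.d0 ≫ G.s0) (𝟙 G.X1) (by simp [G.r1]) ≫ v →
      u = v := by
    intro T u v h1 h2
    exact sections_cancel hmal G.d0 G.s0 G.d1 G.s0 G.r0 G.r1 hG h1 h2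
  constructor
  · intro m m' h0 h1 h0' h1'
    exact key m m' (h1.trans h1'.symm) (h0.trans h0'.symm)
  · intro m h0 h1
    have hd0 : m ≫ G.d0 = pullback.fst G.d1 G.d0 ≫ G.d0 := by
      apply key
      · simp [reassoc_of% h1]
      · simp [reassoc_of% h0, G.r0]
    have hd1 : m ≫ G.d1 = pullback.snd G.d1 G.d0 ≫ G.d1 := by
      apply key
      · simp [reassoc_of% h1, G.r1]
      · simp [reassoc_of% h0]
    refine ⟨hd0, hd1, ?_⟩
    -- associativity
    set q : pullback G.d1 G.d0 ⟶ G.X0 := pullback.snd G.d1 G.d0 ≫ G.d1 with hq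
    set s1l : G.X1 ⟶ pullback G.d1 G.d0 :=
      pullback.lift (𝟙 G.X1) (G.d1 ≫ G.s0) (by simp [G.r0]) with hs1l
    set t0l : G.X1 ⟶ pullback G.d1 G.d0 :=
      pullback.lift (G.d0 ≫ G.s0) (𝟙 G.X1) (by simp [G.r1]) with ht0l
    have hs1f : s1l ≫ pullback.fst G.d1 G.d0 = 𝟙 G.X1 := by simp [hs1l]
    have hs1s : s1l ≫ pullback.snd G.d1 G.d0 = G.d1 ≫ G.s0 := by simp [hs1l]
    have ht0f : t0l ≫ pullback.fst G.d1 G.d0 = G.d0 ≫ G.s0 := by simp [ht0l]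
    have ht0s : t0l ≫ pullback.snd G.d1 G.d0 = 𝟙 G.X1 := by simp [ht0l]
    have hqt : (G.s0 ≫ s1l) ≫ q = 𝟙 G.X0 := by
      rw [hq, Category.assoc, ← Category.assoc s1l, hs1s, Category.assoc, G.r1,
        Category.comp_id, G.r1]
    -- joint epicity on X₃, the object of composable triples
    have key3 : ∀ {T : C} (u v : pullback q G.d0 ⟶ T),
        pullback.lift (𝟙 _) (q ≫ G.s0)
          (by rw [Category.id_comp, Category.assoc, G.r0, Category.comp_id]) ≫ u =
        pullback.lift (𝟙 _) (q ≫ G.s0)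
          (by rw [Category.id_comp, Category.assoc, G.r0, Category.comp_id]) ≫ v →
        pullback.lift (G.d0 ≫ (G.s0 ≫ s1l)) (𝟙 G.X1)
          (by rw [Category.id_comp, Category.assoc, hqt, Category.comp_id]) ≫ u =
        pullback.lift (G.d0 ≫ (G.s0 ≫ s1l)) (𝟙 G.X1)
          (by rw [Category.id_comp, Category.assoc, hqt, Category.comp_id]) ≫ v →
        u = v := by
      intro T u v h1' h2'
      exact sections_cancel hmal G.d0 G.s0 q (G.s0 ≫ s1l) G.r0 hqt hG h1' h2'
    set p1 : pullback q G.d0 ⟶ pullback G.d1 G.d0 := pullback.fst q G.d0 with hp1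
    set p2 : pullback q G.d0 ⟶ G.X1 := pullback.snd q G.d0 with hp2
    have hpc : p1 ≫ q = p2 ≫ G.d0 := pullback.condition
    -- the two ternary composites on X₃
    have wL : (p1 ≫ m) ≫ G.d1 = p2 ≫ G.d0 := by
      simpa [hd1, hq] using hpc
    set L : pullback q G.d0 ⟶ pullback G.d1 G.d0 :=
      pullback.lift (p1 ≫ m) p2 wL with hL
    have wI : (p1 ≫ pullback.snd G.d1 G.d0) ≫ G.d1 = p2 ≫ G.d0 := by
      simpa [hq] using hpc
    set I : pullback q G.d0 ⟶ pullback G.d1 G.d0 :=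
      pullback.lift (p1 ≫ pullback.snd G.d1 G.d0) p2 wI with hI
    have wR : (p1 ≫ pullback.fst G.d1 G.d0) ≫ G.d1 = (I ≫ m) ≫ G.d0 := by
      conv_rhs => rw [Category.assoc, hd0]
      rw [hI]
      simp [pullback.condition]
    set R : pullback q G.d0 ⟶ pullback G.d1 G.d0 :=
      pullback.lift (p1 ≫ pullback.fst G.d1 G.d0) (I ≫ m) wR with hR
    -- the key associativity identity
    have main : L ≫ m = R ≫ m := by
      apply key3
      · -- restrict along the section s' : X₂ → X₃
        have e1 : pullback.lift (𝟙 _) (q ≫ G.s0)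
            (by rw [Category.id_comp, Category.assoc, G.r0, Category.comp_id]) ≫ L
            = m ≫ s1l := by
          apply pullback.hom_ext <;>
            simp [hL, hp1, hp2, hq, hs1f, hs1s, reassoc_of% hd1]
        have eI : pullback.lift (𝟙 _) (q ≫ G.s0)
            (by rw [Category.id_comp, Category.assoc, G.r0, Category.comp_id]) ≫ I
            = pullback.snd G.d1 G.d0 ≫ s1l := by
          apply pullback.hom_ext <;> simp [hI, hp1, hp2, hq, hs1f, hs1s]
        have e2 : pullback.lift (𝟙 _) (q ≫ G.s0)
            (by rw [Category.id_comp, Category.assoc, G.r0, Category.comp_id]) ≫ R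
            = 𝟙 _ := by
          apply pullback.hom_ext <;>
            simp [hR, hp1, hp2, reassoc_of% eI, h1]
        rw [reassoc_of% e1, reassoc_of% e2, h1, Category.comp_id]
      · -- restrict along the section tbar : X₁ → X₃
        have f1 : pullback.lift (G.d0 ≫ (G.s0 ≫ s1l)) (𝟙 G.X1)
            (by rw [Category.id_comp, Category.assoc, hqt, Category.comp_id]) ≫ L
            = t0l := by
          apply pullback.hom_ext <;>
            simp [hL, hp1, hp2, ht0f, ht0s, h1]
        have fI : pullback.lift (G.d0 ≫ (G.s0 ≫ s1l)) (𝟙 G.X1)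
            (by rw [Category.id_comp, Category.assoc, hqt, Category.comp_id]) ≫ I
            = t0l := by
          apply pullback.hom_ext <;>
            simp [hI, hp1, hp2, hs1s, ht0f, ht0s, reassoc_of% G.r1]
        have f2 : pullback.lift (G.d0 ≫ (G.s0 ≫ s1l)) (𝟙 G.X1)
            (by rw [Category.id_comp, Category.assoc, hqt, Category.comp_id]) ≫ R
            = t0l := by
          apply pullback.hom_ext <;>
            simp [hR, hp1, hp2, hs1f, ht0f, ht0s, reassoc_of% fI, h0]
        rw [reassoc_of% f1, reassoc_of% f2]
    -- transport along the classifying map of a composable triple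
    intro Z a b c hab hbc w1 w2
    have wl : pullback.lift a b hab ≫ q = c ≫ G.d0 := by
      rw [hq, ← Category.assoc, pullback.lift_snd, hbc]
    set l : Z ⟶ pullback q G.d0 := pullback.lift (pullback.lift a b hab) c wl with hl
    have gL : pullback.lift (pullback.lift a b hab ≫ m) c w1 = l ≫ L := by
      apply pullback.hom_ext <;> simp [hl, hL, hp1, hp2]
    have gI : pullback.lift b c hbc = l ≫ I := by
      apply pullback.hom_ext <;> simp [hl, hI, hp1, hp2]
    have gR : pullback.lift a (pullback.lift b c hbc ≫ m) w2 = l ≫ R := by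
      apply pullback.hom_ext <;> simp [hl, hR, hI, hp1, hp2, gI]
    rw [gL, gR, Category.assoc, Category.assoc, main]
end

section
/- Let E be a Σ-Mal'tsev category and (f,s) : X ⇄ Y a split epimorphism in Σ. Then there is at most one monoid structure on the object (f,s) in the fibre Pt_Y(E) of points over Y, and when such a structure exists it is necessarily commutative. -/
open CategoryTheory CategoryTheory.Limits

universe v u

variable {C : Type u} [Category.{v} C]

/-- An internal monoid structure on the point `(f,s)` in the fibre `Pt_Y(C)`:
a composition `m` over `Y` on `X ×_Y X`, unital for the two canonical sections and
associative. -/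
def MonoidStr [HasPullbacks C] {X Y : C} (f : X ⟶ Y) (s : Y ⟶ X) (hs : s ≫ f = 𝟙 Y)
    (m : pullback f f ⟶ X) : Prop :=
  m ≫ f = pullback.fst f f ≫ f ∧
  pullback.lift (f ≫ s) (𝟙 X) (by simp [hs]) ≫ m = 𝟙 X ∧
  pullback.lift (𝟙 X) (f ≫ s) (by simp [hs]) ≫ m = 𝟙 X ∧
  ∀ ⦃Z : C⦄ (a b c : Z ⟶ X) (hab : a ≫ f = b ≫ f) (hbc : b ≫ f = c ≫ f)
    (w1 : (pullback.lift a b hab ≫ m) ≫ f = c ≫ f)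
    (w2 : a ≫ f = (pullback.lift b c hbc ≫ m) ≫ f),
    pullback.lift _ c w1 ≫ m = pullback.lift a _ w2 ≫ m

section Aux

/-- From a jointly extremally epic pair, two parallel maps agreeing on both legs are equal. -/
theorem JointlyExtremallyEpic.hom_ext [HasEqualizers C] {A B Z W : C} {a : A ⟶ Z} {b : B ⟶ Z}
    (h : JointlyExtremallyEpic a b) (u v : Z ⟶ W)
    (ha : a ≫ u = a ≫ v) (hb : b ≫ u = b ≫ v) : u = v := by
  have hiso : IsIso (equalizer.ι u v) :=
    h (equalizer.ι u v) inferInstance (equalizer.lift a ha) (equalizer.lift b hb)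
      (equalizer.lift_ι _ _) (equalizer.lift_ι _ _)
  have := equalizer.condition u v
  exact (cancel_epi (equalizer.ι u v)).mp this

end Aux

/-- In a `Σ`-Mal'tsev category, a split epimorphism in `Σ` carries at most one monoid
structure in the fibre of points, and such a structure is necessarily commutative. -/
theorem at_most_one_monoid_structure [HasFiniteLimits C] (Sig : SigClass C)
    (hfib : Fibrational Sig) (hmal : SigmaMaltsev Sig)
    {X Y : C} (f : X ⟶ Y) (s : Y ⟶ X) (hs : s ≫ f = 𝟙 Y) (hSig : Sig f s) :
    (∀ m m' : pullback f f ⟶ X, MonoidStr f s hs m → MonoidStr f s hs m' → m = m') ∧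
    (∀ m : pullback f f ⟶ X, MonoidStr f s hs m →
      pullback.lift (pullback.snd f f) (pullback.fst f f) pullback.condition.symm ≫ m = m) := by
  have hpb : IsPullback (pullback.fst f f) (pullback.snd f f) f f :=
    IsPullback.of_hasPullback f f
  set s' : X ⟶ pullback f f := pullback.lift (f ≫ s) (𝟙 X) (by simp [hs]) with hs'def
  set tb : X ⟶ pullback f f := pullback.lift (𝟙 X) (f ≫ s) (by simp [hs]) with htbdef
  have hjee : JointlyExtremallyEpic s' tb := by
    refine hmal f s (pullback.snd f f) s' f s (pullback.fst f f) tb hs ?_ hs ?_ hpb ?_ ?_ hSig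
    · simp only [hs'def, pullback.lift_snd]
    · simp only [htbdef, pullback.lift_fst]
    · simp only [hs'def, pullback.lift_fst]
    · simp only [htbdef, pullback.lift_snd]
  constructor
  · intro m m' hm hm'
    refine hjee.hom_ext m m' ?_ ?_
    · rw [hm.2.1, hm'.2.1]
    · rw [hm.2.2.1, hm'.2.2.1]
  · intro m hm
    refine hjee.hom_ext _ m ?_ ?_
    · rw [← Category.assoc]
      have : s' ≫ pullback.lift (pullback.snd f f) (pullback.fst f f)
          pullback.condition.symm = tb := by
        apply pullback.hom_ext <;> simp only [hs'def, htbdef, Category.assoc, pullback.lift_fst, pullback.lift_snd]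
      rw [this, hm.2.2.1, hm.2.1]
    · rw [← Category.assoc]
      have : tb ≫ pullback.lift (pullback.snd f f) (pullback.fst f f)
          pullback.condition.symm = s' := by
        apply pullback.hom_ext <;> simp only [hs'def, htbdef, Category.assoc, pullback.lift_fst, pullback.lift_snd]
      rw [this, hm.2.1, hm.2.2.1]
end

section
/- Let E be a regular Σ-Mal'tsev category. If R is a reflexive relation and S is a symmetric Σ-relation on the same object X, then R and S permute: R ∘ S = S ∘ R. -/
open CategoryTheory CategoryTheory.Limits

universe v u

variable {C : Type u} [Category.{v} C]

/-- `C` is a regular category: finite limits, coequalizers of kernel pairs, and regular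
epimorphisms stable under pullback. -/
def RegularCat (C : Type u) [Category.{v} C] [HasFiniteLimits C] : Prop :=
  (∀ ⦃X Y : C⦄ (f : X ⟶ Y), HasCoequalizer (pullback.fst f f) (pullback.snd f f)) ∧
  (∀ ⦃W X Y Z : C⦄ (f : X ⟶ Y) (g : Z ⟶ Y) (f' : W ⟶ Z) (g' : W ⟶ X),
      IsPullback g' f' f g → Nonempty (RegularEpi f) → Nonempty (RegularEpi f'))

section AuxPermute

variable [HasFiniteLimits C]

lemma mono_prodLift_of_jointlyMono {N Y : C} (n0 n1 : N ⟶ Y)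
    (hN : ∀ ⦃Z : C⦄ (a b : Z ⟶ N), a ≫ n0 = b ≫ n0 → a ≫ n1 = b ≫ n1 → a = b) :
    Mono (prod.lift n0 n1) :=
  ⟨fun {Z} a b h => by
    apply hN
    · simpa [prod.lift_fst, prod.lift_snd, pullback.lift_fst_assoc, pullback.lift_snd_assoc] using congrArg (fun k => k ≫ (prod.fst : Y ⨯ Y ⟶ Y)) h
    · simpa [prod.lift_fst, prod.lift_snd, pullback.lift_fst_assoc, pullback.lift_snd_assoc] using congrArg (fun k => k ≫ (prod.snd : Y ⨯ Y ⟶ Y)) h⟩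

/-- Factor a pair of maps through a jointly-monic pair, using a jointly extremally
epic pair of sections whose composites factor pointwise. -/
lemma jointlyExtremallyEpic_factor {P A B N Y : C} {sa : A ⟶ P} {sb : B ⟶ P}
    (hje : JointlyExtremallyEpic sa sb) (n0 n1 : N ⟶ Y)
    (hN : Mono (prod.lift n0 n1))
    (c0 c1 : P ⟶ Y) (ua : A ⟶ N) (ub : B ⟶ N)
    (ha0 : ua ≫ n0 = sa ≫ c0) (ha1 : ua ≫ n1 = sa ≫ c1)
    (hb0 : ub ≫ n0 = sb ≫ c0) (hb1 : ub ≫ n1 = sb ≫ c1) :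
    ∃ ψ : P ⟶ N, ψ ≫ n0 = c0 ∧ ψ ≫ n1 = c1 := by
  haveI := hN
  have hac : sa ≫ prod.lift c0 c1 = ua ≫ prod.lift n0 n1 := by
    apply Limits.prod.hom_ext
    · simp [prod.lift_fst, prod.lift_snd, pullback.lift_fst_assoc, pullback.lift_snd_assoc, ha0]
    · simp [prod.lift_fst, prod.lift_snd, pullback.lift_fst_assoc, pullback.lift_snd_assoc, ha1]
  have hbc : sb ≫ prod.lift c0 c1 = ub ≫ prod.lift n0 n1 := by
    apply Limits.prod.hom_ext
    · simp [prod.lift_fst, prod.lift_snd, pullback.lift_fst_assoc, pullback.lift_snd_assoc, hb0]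
    · simp [prod.lift_fst, prod.lift_snd, pullback.lift_fst_assoc, pullback.lift_snd_assoc, hb1]
  haveI : IsIso (pullback.fst (prod.lift c0 c1) (prod.lift n0 n1)) :=
    hje (pullback.fst (prod.lift c0 c1) (prod.lift n0 n1)) inferInstance
      (pullback.lift sa ua hac) (pullback.lift sb ub hbc)
      (pullback.lift_fst _ _ _) (pullback.lift_fst _ _ _)
  refine ⟨inv (pullback.fst (prod.lift c0 c1) (prod.lift n0 n1)) ≫
    pullback.snd (prod.lift c0 c1) (prod.lift n0 n1), ?_, ?_⟩
  all_goals
    have key : (inv (pullback.fst (prod.lift c0 c1) (prod.lift n0 n1)) ≫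
        pullback.snd (prod.lift c0 c1) (prod.lift n0 n1)) ≫ prod.lift n0 n1 =
        prod.lift c0 c1 := by
      rw [Category.assoc, ← pullback.condition, IsIso.inv_hom_id_assoc]
  · simpa [prod.lift_fst, prod.lift_snd, pullback.lift_fst_assoc, pullback.lift_snd_assoc] using congrArg (fun k => k ≫ (prod.fst : Y ⨯ Y ⟶ Y)) key
  · simpa [prod.lift_fst, prod.lift_snd, pullback.lift_fst_assoc, pullback.lift_snd_assoc] using congrArg (fun k => k ≫ (prod.snd : Y ⨯ Y ⟶ Y)) key

/-- Descend a map along a regular epimorphism into a jointly-monic pair. -/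
lemma regularEpi_desc_pair {P M N Y : C} (e : P ⟶ M) (re : RegularEpi e)
    (n0 n1 : N ⟶ Y)
    (hN : ∀ ⦃Z : C⦄ (a b : Z ⟶ N), a ≫ n0 = b ≫ n0 → a ≫ n1 = b ≫ n1 → a = b)
    (ψ : P ⟶ N) (k0 k1 : M ⟶ Y)
    (hc0 : ψ ≫ n0 = e ≫ k0) (hc1 : ψ ≫ n1 = e ≫ k1) :
    ∃ φ : M ⟶ N, φ ≫ n0 = k0 ∧ φ ≫ n1 = k1 := by
  have hco : re.left ≫ ψ = re.right ≫ ψ := by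
    apply hN
    · rw [Category.assoc, Category.assoc, hc0, ← Category.assoc, re.w, Category.assoc]
    · rw [Category.assoc, Category.assoc, hc1, ← Category.assoc, re.w, Category.assoc]
  have hπ : e ≫ Cofork.IsColimit.desc re.isColimit ψ hco = ψ :=
    Cofork.IsColimit.π_desc' re.isColimit ψ hco
  refine ⟨Cofork.IsColimit.desc re.isColimit ψ hco, ?_, ?_⟩
  · apply Cofork.IsColimit.hom_ext re.isColimit
    simpa [reassoc_of% hπ] using hc0
  · apply Cofork.IsColimit.hom_ext re.isColimit
    simpa [reassoc_of% hπ] using hc1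

end AuxPermute

/-- In a regular `Σ`-Mal'tsev category, a reflexive relation `R` and a symmetric
`Σ`-relation `S` on the same object permute: `R ∘ S = S ∘ R` (the images of the two
composites coincide as subobjects of `X × X`). -/
theorem reflexive_relations_permute [HasFiniteLimits C] (hreg : RegularCat C)
    (Sig : SigClass C) (hfib : Fibrational Sig) (hmal : SigmaMaltsev Sig)
    {X : C} (R S : ReflRel X) (hSsym : S.Symm) (hS : Sig S.d0 S.s0)
    {M M' : C} (e : pullback R.d1 S.d0 ⟶ M) (m0 m1 : M ⟶ X)
    (he : Nonempty (RegularEpi e))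
    (hm : ∀ ⦃Z : C⦄ (a b : Z ⟶ M), a ≫ m0 = b ≫ m0 → a ≫ m1 = b ≫ m1 → a = b)
    (he0 : e ≫ m0 = pullback.fst R.d1 S.d0 ≫ R.d0)
    (he1 : e ≫ m1 = pullback.snd R.d1 S.d0 ≫ S.d1)
    (e' : pullback S.d1 R.d0 ⟶ M') (m0' m1' : M' ⟶ X)
    (he' : Nonempty (RegularEpi e'))
    (hm' : ∀ ⦃Z : C⦄ (a b : Z ⟶ M'), a ≫ m0' = b ≫ m0' → a ≫ m1' = b ≫ m1' → a = b)
    (he0' : e' ≫ m0' = pullback.fst S.d1 R.d0 ≫ S.d0)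
    (he1' : e' ≫ m1' = pullback.snd S.d1 R.d0 ≫ R.d1) :
    ∃ φ : M ≅ M', φ.hom ≫ m0' = m0 ∧ φ.hom ≫ m1' = m1 := by
  
  obtain ⟨σ, hσ0, hσ1⟩ := hSsym
  have hσσ : σ ≫ σ = 𝟙 S.R :=
    S.jm _ _ (by rw [Category.assoc, hσ0, hσ1, Category.id_comp])
      (by rw [Category.assoc, hσ1, hσ0, Category.id_comp])
  haveI : IsIso σ := ⟨σ, hσσ, hσσ⟩
  have hpbσ : IsPullback σ S.d1 S.d0 (𝟙 X) :=
    IsPullback.of_horiz_isIso ⟨by rw [hσ0, Category.comp_id]⟩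
  have hSd1 : Sig S.d1 (S.s0 ≫ σ) :=
    hfib.1 S.d0 S.s0 S.d1 (S.s0 ≫ σ) (𝟙 X) σ hpbσ S.r0
      (by rw [Category.assoc, hσ1, S.r0])
      (by rw [Category.assoc, hσσ, Category.comp_id, Category.id_comp]) hS
  -- basic composition identities
  have h1 : (𝟙 R.R) ≫ R.d1 = (R.d1 ≫ S.s0) ≫ S.d0 := by
    rw [Category.id_comp, Category.assoc, S.r0, Category.comp_id]
  have h2 : (S.d0 ≫ R.s0) ≫ R.d1 = (𝟙 S.R) ≫ S.d0 := by
    rw [Category.id_comp, Category.assoc, R.r1, Category.comp_id]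
  have h3 : (R.d0 ≫ S.s0 ≫ σ) ≫ S.d1 = (𝟙 R.R) ≫ R.d0 := by
    rw [Category.id_comp, Category.assoc, Category.assoc, hσ1, S.r0, Category.comp_id]
  have h4 : (𝟙 S.R) ≫ S.d1 = (S.d1 ≫ R.s0) ≫ R.d0 := by
    rw [Category.id_comp, Category.assoc, R.r0, Category.comp_id]
  have hu1 : (R.d0 ≫ S.s0) ≫ S.d1 = (𝟙 R.R) ≫ R.d0 := by
    rw [Category.id_comp, Category.assoc, S.r1, Category.comp_id]
  -- First Mal'tsev application: on `pullback R.d1 S.d0`.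
  have hje1 : JointlyExtremallyEpic (pullback.lift (𝟙 R.R) (R.d1 ≫ S.s0) h1)
      (pullback.lift (S.d0 ≫ R.s0) (𝟙 S.R) h2) :=
    hmal S.d0 S.s0 (pullback.fst R.d1 S.d0) (pullback.lift (𝟙 R.R) (R.d1 ≫ S.s0) h1)
      R.d1 R.s0 (pullback.snd R.d1 S.d0) (pullback.lift (S.d0 ≫ R.s0) (𝟙 S.R) h2)
      S.r0 (pullback.lift_fst _ _ _) R.r1 (pullback.lift_snd _ _ _)
      (IsPullback.of_hasPullback R.d1 S.d0).flip
      (pullback.lift_snd _ _ _) (pullback.lift_fst _ _ _) hS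
  obtain ⟨ψ, hψ0, hψ1⟩ := jointlyExtremallyEpic_factor hje1 m0' m1'
    (mono_prodLift_of_jointlyMono m0' m1' hm')
    (pullback.fst R.d1 S.d0 ≫ R.d0) (pullback.snd R.d1 S.d0 ≫ S.d1)
    (pullback.lift (R.d0 ≫ S.s0) (𝟙 R.R) hu1 ≫ e')
    (pullback.lift (𝟙 S.R) (S.d1 ≫ R.s0) h4 ≫ e')
    (by simp [prod.lift_fst, prod.lift_snd, pullback.lift_fst_assoc, pullback.lift_snd_assoc, he0', S.r0]) (by simp [prod.lift_fst, prod.lift_snd, pullback.lift_fst_assoc, pullback.lift_snd_assoc, he1', S.r1])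
    (by simp [prod.lift_fst, prod.lift_snd, pullback.lift_fst_assoc, pullback.lift_snd_assoc, he0', R.r0]) (by simp [prod.lift_fst, prod.lift_snd, pullback.lift_fst_assoc, pullback.lift_snd_assoc, he1', R.r1])
  obtain ⟨re⟩ := he
  obtain ⟨φh, hφh0, hφh1⟩ := regularEpi_desc_pair e re m0' m1' hm' ψ m0 m1
    (by rw [hψ0, he0]) (by rw [hψ1, he1])
  -- Second Mal'tsev application: on `pullback S.d1 R.d0`, using `(S.d1, S.s0 ≫ σ) ∈ Σ`.
  have hje2 : JointlyExtremallyEpic (pullback.lift (R.d0 ≫ S.s0 ≫ σ) (𝟙 R.R) h3)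
      (pullback.lift (𝟙 S.R) (S.d1 ≫ R.s0) h4) :=
    hmal S.d1 (S.s0 ≫ σ) (pullback.snd S.d1 R.d0)
      (pullback.lift (R.d0 ≫ S.s0 ≫ σ) (𝟙 R.R) h3)
      R.d0 R.s0 (pullback.fst S.d1 R.d0) (pullback.lift (𝟙 S.R) (S.d1 ≫ R.s0) h4)
      (by rw [Category.assoc, hσ1, S.r0]) (pullback.lift_snd _ _ _) R.r0
      (pullback.lift_fst _ _ _) (IsPullback.of_hasPullback S.d1 R.d0)
      (pullback.lift_fst _ _ _) (pullback.lift_snd _ _ _) hSd1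
  obtain ⟨ψ', hψ0', hψ1'⟩ := jointlyExtremallyEpic_factor hje2 m0 m1
    (mono_prodLift_of_jointlyMono m0 m1 hm)
    (pullback.fst S.d1 R.d0 ≫ S.d0) (pullback.snd S.d1 R.d0 ≫ R.d1)
    (pullback.lift (𝟙 R.R) (R.d1 ≫ S.s0) h1 ≫ e)
    (pullback.lift (S.d0 ≫ R.s0) (𝟙 S.R) h2 ≫ e)
    (by simp [prod.lift_fst, prod.lift_snd, pullback.lift_fst_assoc, pullback.lift_snd_assoc, he0, hσ0, S.r1]) (by simp [prod.lift_fst, prod.lift_snd, pullback.lift_fst_assoc, pullback.lift_snd_assoc, he1, S.r1])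
    (by simp [prod.lift_fst, prod.lift_snd, pullback.lift_fst_assoc, pullback.lift_snd_assoc, he0, R.r0]) (by simp [prod.lift_fst, prod.lift_snd, pullback.lift_fst_assoc, pullback.lift_snd_assoc, he1, R.r1])
  obtain ⟨re'⟩ := he'
  obtain ⟨φi, hφi0, hφi1⟩ := regularEpi_desc_pair e' re' m0 m1 hm ψ' m0' m1'
    (by rw [hψ0', he0']) (by rw [hψ1', he1'])
  refine ⟨⟨φh, φi, ?_, ?_⟩, hφh0, hφh1⟩
  · apply hm
    · rw [Category.assoc, hφi0, hφh0, Category.id_comp]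
    · rw [Category.assoc, hφi1, hφh1, Category.id_comp]
  · apply hm'
    · rw [Category.assoc, hφh0, hφi0, Category.id_comp]
    · rw [Category.assoc, hφh1, hφi1, Category.id_comp]
end

section
/- Let E be a Σ-Mal'tsev category, R an equivalence relation and S a Σ-equivalence relation on an object X. If R ∩ S = Δ_X (the diagonal), then R and S centralize each other, i.e. there exists a connector p : R ×_X S → X satisfying the Mal'tsev identities p(x R x S y) = y and p(x R y S y) = x. -/
open CategoryTheory CategoryTheory.Limits

universe v u

variable {C : Type u} [Category.{v} C]

/-- In a `Σ`-Mal'tsev category, an equivalence relation `R` and a `Σ`-equivalence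
relation `S` centralize each other as soon as `R ∩ S = Δ_X`. -/
theorem centralize_of_inter_diagonal [HasFiniteLimits C] (Sig : SigClass C)
    (hfib : Fibrational Sig) (hmal : SigmaMaltsev Sig)
    {X : C} (R S : ReflRel X) (hR : R.IsEquiv) (hS : S.IsEquiv) (hSs : Sig S.d0 S.s0)
    (hcap : ∀ ⦃Z : C⦄ (a : Z ⟶ R.R) (b : Z ⟶ S.R),
      a ≫ R.d0 = b ≫ S.d0 → a ≫ R.d1 = b ≫ S.d1 → a ≫ R.d0 = a ≫ R.d1) :
    Centralize R S := by
  obtain ⟨⟨σR, σR0, σR1⟩, ⟨tR, tR0, tR1⟩⟩ := hR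
  obtain ⟨⟨σS, σS0, σS1⟩, ⟨tS, tS0, tS1⟩⟩ := hS
  -- the two canonical sections of the double pullback
  let s' : R.R ⟶ pullback R.d1 S.d0 := pullback.lift (𝟙 R.R) (R.d1 ≫ S.s0) (by simp [S.r0])
  let tb : S.R ⟶ pullback R.d1 S.d0 := pullback.lift (S.d0 ≫ R.s0) (𝟙 S.R) (by simp [R.r1])
  -- comparison maps to X × X
  let qP : pullback R.d1 S.d0 ⟶ X ⨯ X :=
    prod.lift (pullback.fst R.d1 S.d0 ≫ R.d0) (pullback.snd R.d1 S.d0 ≫ S.d1)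
  let qQ : pullback S.d1 R.d0 ⟶ X ⨯ X :=
    prod.lift (pullback.fst S.d1 R.d0 ≫ S.d0) (pullback.snd S.d1 R.d0 ≫ R.d1)
  -- qQ is a monomorphism, thanks to R ∩ S = Δ
  haveI monoQ : Mono qQ := by
    constructor
    intro Z a b h
    have hx : a ≫ pullback.fst S.d1 R.d0 ≫ S.d0 = b ≫ pullback.fst S.d1 R.d0 ≫ S.d0 := by
      have := h =≫ prod.fst; simpa [qQ, prod.lift_fst, prod.lift_snd, prod.lift_fst_assoc, prod.lift_snd_assoc, pullback.lift_fst, pullback.lift_snd, pullback.lift_fst_assoc, pullback.lift_snd_assoc] using this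
    have hz : a ≫ pullback.snd S.d1 R.d0 ≫ R.d1 = b ≫ pullback.snd S.d1 R.d0 ≫ R.d1 := by
      have := h =≫ prod.snd; simpa [qQ, prod.lift_fst, prod.lift_snd, prod.lift_fst_assoc, prod.lift_snd_assoc, pullback.lift_fst, pullback.lift_snd, pullback.lift_fst_assoc, pullback.lift_snd_assoc] using this
    -- v : (w, w') ∈ S
    let v : Z ⟶ S.R :=
      pullback.lift (a ≫ pullback.fst S.d1 R.d0 ≫ σS) (b ≫ pullback.fst S.d1 R.d0)
        (by simp only [Category.assoc, σS1]; exact hx) ≫ tS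
    have hv0 : v ≫ S.d0 = a ≫ pullback.fst S.d1 R.d0 ≫ S.d1 := by
      simp [v, tS0, σS0, prod.lift_fst, prod.lift_snd, prod.lift_fst_assoc, prod.lift_snd_assoc, pullback.lift_fst, pullback.lift_snd, pullback.lift_fst_assoc, pullback.lift_snd_assoc]
    have hv1 : v ≫ S.d1 = b ≫ pullback.fst S.d1 R.d0 ≫ S.d1 := by
      simp [v, tS1, prod.lift_fst, prod.lift_snd, prod.lift_fst_assoc, prod.lift_snd_assoc, pullback.lift_fst, pullback.lift_snd, pullback.lift_fst_assoc, pullback.lift_snd_assoc]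
    -- u : (w, w') ∈ R
    let u : Z ⟶ R.R :=
      pullback.lift (a ≫ pullback.snd S.d1 R.d0) (b ≫ pullback.snd S.d1 R.d0 ≫ σR)
        (by simp only [Category.assoc, σR0]; exact hz) ≫ tR
    have hu0 : u ≫ R.d0 = a ≫ pullback.snd S.d1 R.d0 ≫ R.d0 := by
      simp [u, tR0, prod.lift_fst, prod.lift_snd, prod.lift_fst_assoc, prod.lift_snd_assoc, pullback.lift_fst, pullback.lift_snd, pullback.lift_fst_assoc, pullback.lift_snd_assoc]
    have hu1 : u ≫ R.d1 = b ≫ pullback.snd S.d1 R.d0 ≫ R.d0 := by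
      simp [u, tR1, σR1, prod.lift_fst, prod.lift_snd, prod.lift_fst_assoc, prod.lift_snd_assoc, pullback.lift_fst, pullback.lift_snd, pullback.lift_fst_assoc, pullback.lift_snd_assoc]
    have hcond : ∀ c : Z ⟶ pullback S.d1 R.d0,
        c ≫ pullback.fst S.d1 R.d0 ≫ S.d1 = c ≫ pullback.snd S.d1 R.d0 ≫ R.d0 := by
      intro c
      simp only [← Category.assoc, pullback.condition]
    have hw : u ≫ R.d0 = u ≫ R.d1 := by
      refine hcap u v ?_ ?_
      · rw [hu0, hv0, hcond]
      · rw [hu1, hv1, hcond]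
    -- conclude equality of the two components
    have hww' : a ≫ pullback.fst S.d1 R.d0 ≫ S.d1 = b ≫ pullback.fst S.d1 R.d0 ≫ S.d1 := by
      rw [hu0, hu1] at hw
      rw [hcond a, hcond b]
      exact hw
    have hfst : a ≫ pullback.fst S.d1 R.d0 = b ≫ pullback.fst S.d1 R.d0 :=
      S.jm _ _ (by simpa using hx) (by simpa using hww')
    have hsnd : a ≫ pullback.snd S.d1 R.d0 = b ≫ pullback.snd S.d1 R.d0 := by
      refine R.jm _ _ ?_ (by simpa using hz)
      rw [Category.assoc, Category.assoc, ← hcond a, ← hcond b, hww']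
    exact pullback.hom_ext (by simpa using hfst) (by simpa using hsnd)
  -- factorizations through the pullback M = P ×_{X×X} Q
  let a'Q : R.R ⟶ pullback S.d1 R.d0 := pullback.lift (R.d0 ≫ S.s0) (𝟙 R.R) (by simp [S.r1])
  let b'Q : S.R ⟶ pullback S.d1 R.d0 := pullback.lift (𝟙 S.R) (S.d1 ≫ R.s0) (by simp [R.r0])
  have ha : s' ≫ qP = a'Q ≫ qQ := by
    apply Limits.prod.hom_ext
    · simp [s', qP, a'Q, qQ, S.r0, prod.lift_fst, prod.lift_snd, prod.lift_fst_assoc, prod.lift_snd_assoc, pullback.lift_fst, pullback.lift_snd, pullback.lift_fst_assoc, pullback.lift_snd_assoc]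
    · simp [s', qP, a'Q, qQ, S.r1, prod.lift_fst, prod.lift_snd, prod.lift_fst_assoc, prod.lift_snd_assoc, pullback.lift_fst, pullback.lift_snd, pullback.lift_fst_assoc, pullback.lift_snd_assoc]
  have hb : tb ≫ qP = b'Q ≫ qQ := by
    apply Limits.prod.hom_ext
    · simp [tb, qP, b'Q, qQ, R.r0, prod.lift_fst, prod.lift_snd, prod.lift_fst_assoc, prod.lift_snd_assoc, pullback.lift_fst, pullback.lift_snd, pullback.lift_fst_assoc, pullback.lift_snd_assoc]
    · simp [tb, qP, b'Q, qQ, R.r1, prod.lift_fst, prod.lift_snd, prod.lift_fst_assoc, prod.lift_snd_assoc, pullback.lift_fst, pullback.lift_snd, pullback.lift_fst_assoc, pullback.lift_snd_assoc]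
  let a' : R.R ⟶ pullback qP qQ := pullback.lift s' a'Q ha
  let b' : S.R ⟶ pullback qP qQ := pullback.lift tb b'Q hb
  -- joint extremal epicity from the Σ-Mal'tsev axiom
  have hJEE : JointlyExtremallyEpic s' tb :=
    hmal S.d0 S.s0 (pullback.fst R.d1 S.d0) s' R.d1 R.s0 (pullback.snd R.d1 S.d0) tb
      S.r0 (by simp [s', prod.lift_fst, prod.lift_snd, prod.lift_fst_assoc, prod.lift_snd_assoc, pullback.lift_fst, pullback.lift_snd, pullback.lift_fst_assoc, pullback.lift_snd_assoc]) R.r1 (by simp [tb, prod.lift_fst, prod.lift_snd, prod.lift_fst_assoc, prod.lift_snd_assoc, pullback.lift_fst, pullback.lift_snd, pullback.lift_fst_assoc, pullback.lift_snd_assoc])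
      (IsPullback.of_hasPullback R.d1 S.d0).flip
      (by simp [s', prod.lift_fst, prod.lift_snd, prod.lift_fst_assoc, prod.lift_snd_assoc, pullback.lift_fst, pullback.lift_snd, pullback.lift_fst_assoc, pullback.lift_snd_assoc]) (by simp [tb, prod.lift_fst, prod.lift_snd, prod.lift_fst_assoc, prod.lift_snd_assoc, pullback.lift_fst, pullback.lift_snd, pullback.lift_fst_assoc, pullback.lift_snd_assoc]) hSs
  haveI hiso : IsIso (pullback.fst qP qQ) :=
    hJEE (pullback.fst qP qQ) inferInstance a' b'
      (pullback.lift_fst _ _ _) (pullback.lift_fst _ _ _)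
  -- the connector
  refine ⟨inv (pullback.fst qP qQ) ≫ pullback.snd qP qQ ≫ pullback.fst S.d1 R.d0 ≫ S.d1,
    ?_, ?_⟩
  · have h1 : b' ≫ pullback.fst qP qQ = tb := pullback.lift_fst _ _ _
    show tb ≫ _ = S.d1
    rw [← h1, Category.assoc, IsIso.hom_inv_id_assoc]
    simp [b', b'Q, prod.lift_fst, prod.lift_snd, prod.lift_fst_assoc, prod.lift_snd_assoc, pullback.lift_fst, pullback.lift_snd, pullback.lift_fst_assoc, pullback.lift_snd_assoc]
  · have h1 : a' ≫ pullback.fst qP qQ = s' := pullback.lift_fst _ _ _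
    show s' ≫ _ = R.d0
    rw [← h1, Category.assoc, IsIso.hom_inv_id_assoc]
    simp [a', a'Q, S.r1, prod.lift_fst, prod.lift_snd, prod.lift_fst_assoc, prod.lift_snd_assoc, pullback.lift_fst, pullback.lift_snd, pullback.lift_fst_assoc, pullback.lift_snd_assoc]
end

section
/- Let E be a Σ-Mal'tsev category. If a reflexive relation R and a Σ-relation S on X centralize each other with connector p, then the coherence conditions hold: for all x R y S z, one has x S p(x R y S z) and p(x R y S z) R z. -/
open CategoryTheory CategoryTheory.Limits

universe v u

variable {C : Type u} [Category.{v} C]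

attribute [local simp] prod.lift_fst prod.lift_snd prod.lift_fst_assoc prod.lift_snd_assoc pullback.lift_fst pullback.lift_snd pullback.lift_fst_assoc pullback.lift_snd_assoc
lemma ReflRel.mono_pair [HasFiniteLimits C] {X : C} (R : ReflRel X) :
    Mono (prod.lift R.d0 R.d1) := by
  constructor
  intro Z a b h
  apply R.jm
  · have := congrArg (· ≫ prod.fst) h
    simpa using this
  · have := congrArg (· ≫ prod.snd) h
    simpa using this

/-- In a `Σ`-Mal'tsev category, a connector for a reflexive relation `R` and a
`Σ`-relation `S` satisfies the coherence conditions `x S p(xRySz)` and `p(xRySz) R z`. -/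
theorem connector_coherence [HasFiniteLimits C] (Sig : SigClass C)
    (hfib : Fibrational Sig) (hmal : SigmaMaltsev Sig)
    {X : C} (R S : ReflRel X) (hS : Sig S.d0 S.s0)
    (p : pullback R.d1 S.d0 ⟶ X) (hp : IsConnector R S p) :
    (∃ h1 : pullback R.d1 S.d0 ⟶ S.R,
        h1 ≫ S.d0 = pullback.fst R.d1 S.d0 ≫ R.d0 ∧ h1 ≫ S.d1 = p) ∧
    (∃ h2 : pullback R.d1 S.d0 ⟶ R.R,
        h2 ≫ R.d0 = p ∧ h2 ≫ R.d1 = pullback.snd R.d1 S.d0 ≫ S.d1) := by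
  obtain ⟨hp1, hp2⟩ := hp
  set fst := pullback.fst R.d1 S.d0 with hfst
  set snd := pullback.snd R.d1 S.d0 with hsnd
  set s' : R.R ⟶ pullback R.d1 S.d0 :=
    pullback.lift (𝟙 R.R) (R.d1 ≫ S.s0) (by simp [S.r0]) with hs'
  set tb : S.R ⟶ pullback R.d1 S.d0 :=
    pullback.lift (S.d0 ≫ R.s0) (𝟙 S.R) (by simp [R.r1]) with htb
  have hjee : JointlyExtremallyEpic s' tb := by
    refine hmal S.d0 S.s0 fst s' R.d1 R.s0 snd tb S.r0 ?_ R.r1 ?_ ?_ ?_ ?_ hS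
    · simp [hs', hfst]
    · simp [htb, hsnd]
    · exact (IsPullback.of_hasPullback R.d1 S.d0).flip
    · simp [hs', hsnd]
    · simp [htb, hfst]
  constructor
  · -- coherence 1: factor through S
    haveI : Mono (prod.lift S.d0 S.d1) := S.mono_pair
    set q1 : pullback R.d1 S.d0 ⟶ X ⨯ X := prod.lift (fst ≫ R.d0) p with hq1
    set m1 := pullback.fst q1 (prod.lift S.d0 S.d1) with hm1
    have a'w : s' ≫ q1 = (R.d0 ≫ S.s0) ≫ prod.lift S.d0 S.d1 := by
      apply Limits.prod.hom_ext
      · simp [hq1, hs', hfst, S.r0]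
      · have h1 : s' ≫ q1 ≫ prod.snd = R.d0 := by
          simp only [hq1, prod.lift_snd]; exact hp2
        have h2 : ((R.d0 ≫ S.s0) ≫ prod.lift S.d0 S.d1) ≫ prod.snd = R.d0 := by
          simp [S.r1]
        simp only [Category.assoc] at h1 h2 ⊢
        rw [h1, h2]
    have b'w : tb ≫ q1 = (𝟙 S.R) ≫ prod.lift S.d0 S.d1 := by
      apply Limits.prod.hom_ext
      · simp [hq1, htb, hfst, R.r0]
      · have h1 : tb ≫ q1 ≫ prod.snd = S.d1 := by
          simp only [hq1, prod.lift_snd]; exact hp1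
        have h2 : ((𝟙 S.R) ≫ prod.lift S.d0 S.d1) ≫ prod.snd = S.d1 := by simp
        simp only [Category.assoc] at h1 h2 ⊢
        rw [h1, h2]
    have hiso : IsIso m1 := by
      refine hjee m1 inferInstance (pullback.lift s' (R.d0 ≫ S.s0) a'w)
        (pullback.lift tb (𝟙 S.R) b'w) ?_ ?_
      · simp [hm1]
      · simp [hm1]
    refine ⟨inv m1 ≫ pullback.snd q1 (prod.lift S.d0 S.d1), ?_, ?_⟩
    · have := pullback.condition (f := q1) (g := prod.lift S.d0 S.d1)
      have h : pullback.snd q1 (prod.lift S.d0 S.d1) ≫ S.d0 = m1 ≫ fst ≫ R.d0 := by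
        have := congrArg (· ≫ prod.fst) this
        simpa [hq1] using this.symm
      rw [Category.assoc, h]
      simp
    · have := pullback.condition (f := q1) (g := prod.lift S.d0 S.d1)
      have h : pullback.snd q1 (prod.lift S.d0 S.d1) ≫ S.d1 = m1 ≫ p := by
        have := congrArg (· ≫ prod.snd) this
        simpa [hq1] using this.symm
      rw [Category.assoc, h]
      simp
  · -- coherence 2: factor through R
    haveI : Mono (prod.lift R.d0 R.d1) := R.mono_pair
    set q2 : pullback R.d1 S.d0 ⟶ X ⨯ X := prod.lift p (snd ≫ S.d1) with hq2
    set m2 := pullback.fst q2 (prod.lift R.d0 R.d1) with hm2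
    have a'w : s' ≫ q2 = (𝟙 R.R) ≫ prod.lift R.d0 R.d1 := by
      apply Limits.prod.hom_ext
      · have h1 : s' ≫ q2 ≫ prod.fst = R.d0 := by
          simp only [hq2, prod.lift_fst]; exact hp2
        have h2 : ((𝟙 R.R) ≫ prod.lift R.d0 R.d1) ≫ prod.fst = R.d0 := by simp
        simp only [Category.assoc] at h1 h2 ⊢
        rw [h1, h2]
      · simp [hq2, hs', hsnd, S.r1]
    have b'w : tb ≫ q2 = (S.d1 ≫ R.s0) ≫ prod.lift R.d0 R.d1 := by
      apply Limits.prod.hom_ext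
      · have h1 : tb ≫ q2 ≫ prod.fst = S.d1 := by
          simp only [hq2, prod.lift_fst]; exact hp1
        have h2 : ((S.d1 ≫ R.s0) ≫ prod.lift R.d0 R.d1) ≫ prod.fst = S.d1 := by
          simp [R.r0]
        simp only [Category.assoc] at h1 h2 ⊢
        rw [h1, h2]
      · simp [hq2, htb, hsnd, R.r1]
    have hiso : IsIso m2 := by
      refine hjee m2 inferInstance (pullback.lift s' (𝟙 R.R) a'w)
        (pullback.lift tb (S.d1 ≫ R.s0) b'w) ?_ ?_
      · simp [hm2]
      · simp [hm2]
    refine ⟨inv m2 ≫ pullback.snd q2 (prod.lift R.d0 R.d1), ?_, ?_⟩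
    · have := pullback.condition (f := q2) (g := prod.lift R.d0 R.d1)
      have h : pullback.snd q2 (prod.lift R.d0 R.d1) ≫ R.d0 = m2 ≫ p := by
        have := congrArg (· ≫ prod.fst) this
        simpa [hq2] using this.symm
      rw [Category.assoc, h]
      simp
    · have := pullback.condition (f := q2) (g := prod.lift R.d0 R.d1)
      have h : pullback.snd q2 (prod.lift R.d0 R.d1) ≫ R.d1 = m2 ≫ snd ≫ S.d1 := by
        have := congrArg (· ≫ prod.snd) this
        simpa [hq2] using this.symm
      rw [Category.assoc, h]
      simp
end

section
/- Let E be a point-congruous Σ-Mal'tsev category. If g ∘ f and g are Σ-special morphisms, then f is Σ-special. -/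
open CategoryTheory CategoryTheory.Limits

universe v u

variable {C : Type u} [Category.{v} C]

/-- The category of points (split epimorphisms with chosen splitting) of `C`. -/
structure Pt (C : Type u) [Category.{v} C] where
  dom : C
  cod : C
  p : dom ⟶ cod
  s : cod ⟶ dom
  sp : s ≫ p = 𝟙 cod

@[ext]
structure PtHom (a b : Pt C) where
  dh : a.dom ⟶ b.dom
  ch : a.cod ⟶ b.cod
  wp : dh ≫ b.p = a.p ≫ ch
  ws : a.s ≫ dh = ch ≫ b.s

instance : Category (Pt C) where
  Hom a b := PtHom a b
  id a := ⟨𝟙 a.dom, 𝟙 a.cod, by simp, by simp⟩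
  comp u v := ⟨u.dh ≫ v.dh, u.ch ≫ v.ch,
    by rw [Category.assoc, v.wp, ← Category.assoc, u.wp, Category.assoc],
    by rw [← Category.assoc, u.ws, Category.assoc, v.ws, ← Category.assoc]⟩
  id_comp u := by apply PtHom.ext <;> simp [CategoryStruct.comp, CategoryStruct.id]
  comp_id u := by apply PtHom.ext <;> simp [CategoryStruct.comp, CategoryStruct.id]
  assoc u v w := by apply PtHom.ext <;> simp [CategoryStruct.comp]

/-- The class `Σ` is point-congruous: the full subcategory `Σ(C)` of `Pt(C)` is stable
under finite limits. -/
def PointCongruous (Sig : SigClass C) : Prop :=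
  ∀ (J : Type) (_ : SmallCategory J) (_ : FinCategory J) (F : J ⥤ Pt C),
    (∀ j : J, Sig (F.obj j).p (F.obj j).s) →
    ∀ (c : Cone F), IsLimit c → Sig c.pt.p c.pt.s
/-- A morphism is `Σ`-special when its kernel relation is a `Σ`-relation. -/
def SigSpecial [HasPullbacks C] (Sig : SigClass C) {A B : C} (f : A ⟶ B) : Prop :=
  Sig (kerRel f).d0 (kerRel f).s0

section AuxProof

attribute [local simp] pullback.lift_fst pullback.lift_snd pullback.lift_fst_assoc pullback.lift_snd_assoc

@[simp] lemma Pt_comp_dh {a b c : Pt C} (u : a ⟶ b) (v : b ⟶ c) :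
    (u ≫ v).dh = u.dh ≫ v.dh := rfl

@[simp] lemma Pt_comp_ch {a b c : Pt C} (u : a ⟶ b) (v : b ⟶ c) :
    (u ≫ v).ch = u.ch ≫ v.ch := rfl

variable [HasFiniteLimits C]

/-- The point given by the kernel pair of a morphism. -/
@[reducible] noncomputable def ptKer {A B : C} (h : A ⟶ B) : Pt C :=
  ⟨pullback h h, A, pullback.fst h h, pullback.lift (𝟙 A) (𝟙 A) rfl, pullback.lift_fst _ _ _⟩

/-- The identity point on an object. -/
@[reducible] def ptId (A : C) : Pt C := ⟨A, A, 𝟙 A, 𝟙 A, Category.comp_id _⟩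

variable {X Y Z : C} (f : X ⟶ Y) (g : Y ⟶ Z)

/-- The comparison morphism of points `R[f ≫ g] → R[g]`. -/
noncomputable def uHom : ptKer (f ≫ g) ⟶ ptKer g where
  dh := pullback.lift (pullback.fst (f ≫ g) (f ≫ g) ≫ f) (pullback.snd (f ≫ g) (f ≫ g) ≫ f)
    (by have h := pullback.condition (f := f ≫ g) (g := f ≫ g)
        simp only [Category.assoc] at h ⊢; exact h)
  ch := f
  wp := by simp [ptKer]
  ws := by
    apply pullback.hom_ext <;> simp [ptKer]

/-- The diagonal morphism of points `Y → R[g]`. -/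
noncomputable def vHom : ptId Y ⟶ ptKer g where
  dh := pullback.lift (𝟙 Y) (𝟙 Y) rfl
  ch := 𝟙 Y
  wp := by simp [ptKer, ptId]
  ws := by simp [ptKer, ptId]

/-- First projection of the pullback cone: `R[f] → R[f ≫ g]`. -/
noncomputable def pi1 : ptKer f ⟶ ptKer (f ≫ g) where
  dh := pullback.lift (pullback.fst f f) (pullback.snd f f)
    (by rw [← Category.assoc, ← Category.assoc, pullback.condition])
  ch := 𝟙 X
  wp := by simp [ptKer]
  ws := by apply pullback.hom_ext <;> simp [ptKer]

/-- Second projection of the pullback cone: `R[f] → Y`. -/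
noncomputable def pi2 : ptKer f ⟶ ptId Y where
  dh := pullback.fst f f ≫ f
  ch := f
  wp := by simp [ptKer, ptId]
  ws := by simp [ptKer, ptId]

lemma cone_comm : pi1 f g ≫ uHom f g = pi2 f ≫ vHom g := by
  apply PtHom.ext
  · simp only [Pt_comp_dh, uHom, vHom, pi1, pi2]
    apply pullback.hom_ext
    · simp
    · simp [pullback.condition]
  · simp [uHom, vHom, pi1, pi2]

/-- The cone `R[f]` is a limit pullback cone in `Pt C`. -/
noncomputable def kerConeIsLimit :
    IsLimit (PullbackCone.mk (pi1 f g) (pi2 f) (cone_comm f g)) := by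
  refine PullbackCone.IsLimit.mk _ (fun s => ?_) (fun s => ?_) (fun s => ?_) (fun s m h1 h2 => ?_)
  · -- the lift
    have hcond := s.condition
    have hd : s.fst.dh ≫ (uHom f g).dh = s.snd.dh ≫ (vHom g).dh :=
      congrArg PtHom.dh hcond
    have hc : s.fst.ch ≫ f = s.snd.ch := by
      have := congrArg PtHom.ch hcond
      simpa [uHom, vHom] using this
    have key : (s.fst.dh ≫ pullback.fst (f ≫ g) (f ≫ g)) ≫ f
        = (s.fst.dh ≫ pullback.snd (f ≫ g) (f ≫ g)) ≫ f := by
      have h0 := congrArg (· ≫ pullback.fst g g) hd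
      have h1' := congrArg (· ≫ pullback.snd g g) hd
      simp only [Category.assoc, uHom, vHom, pullback.lift_fst, pullback.lift_snd,
        Category.comp_id] at h0 h1'
      rw [← Category.assoc] at h0 h1'
      rw [h0, h1']
    exact
      { dh := pullback.lift (s.fst.dh ≫ pullback.fst (f ≫ g) (f ≫ g))
          (s.fst.dh ≫ pullback.snd (f ≫ g) (f ≫ g)) key
        ch := s.fst.ch
        wp := by
          simp only [ptKer, pullback.lift_fst]
          exact s.fst.wp
        ws := by
          have hws := s.fst.ws
          apply pullback.hom_ext
          · simp only [ptKer, Category.assoc, pullback.lift_fst]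
            rw [← Category.assoc, hws]
            simp [ptKer]
          · simp only [ptKer, Category.assoc, pullback.lift_snd]
            rw [← Category.assoc, hws]
            simp [ptKer] }
  · -- fac fst
    apply PtHom.ext
    · simp only [Pt_comp_dh, pi1]
      apply pullback.hom_ext <;> simp
    · simp [pi1]
  · -- fac snd
    apply PtHom.ext
    · have hd : s.fst.dh ≫ (uHom f g).dh = s.snd.dh ≫ (vHom g).dh :=
        congrArg PtHom.dh s.condition
      have h0 := congrArg (· ≫ pullback.fst g g) hd
      simp only [Category.assoc, uHom, vHom, pullback.lift_fst, Category.comp_id] at h0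
      simp only [Pt_comp_dh, pi2]
      rw [← Category.assoc, pullback.lift_fst]
      simpa using h0
    · have hch := congrArg PtHom.ch s.condition
      simp only [Pt_comp_ch, uHom, vHom, Category.comp_id] at hch
      simp only [Pt_comp_ch, pi2]
      exact hch
  · -- uniqueness
    have hd1 : m.dh ≫ (pi1 f g).dh = s.fst.dh := congrArg PtHom.dh h1
    have hc1 : m.ch ≫ (pi1 f g).ch = s.fst.ch := congrArg PtHom.ch h1
    apply PtHom.ext
    · apply pullback.hom_ext
      · have := congrArg (· ≫ pullback.fst (f ≫ g) (f ≫ g)) hd1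
        simp only [Category.assoc, pi1, pullback.lift_fst] at this ⊢
        exact this
      · have := congrArg (· ≫ pullback.snd (f ≫ g) (f ≫ g)) hd1
        simp only [Category.assoc, pi1, pullback.lift_snd] at this ⊢
        exact this
    · simpa [pi1] using hc1

end AuxProof

/-- In a point-congruous `Σ`-Mal'tsev category, if `f ≫ g` and `g` are `Σ`-special,
then so is `f`. -/
theorem sigSpecial_of_comp [HasFiniteLimits C] (Sig : SigClass C)
    (hfib : Fibrational Sig) (hpc : PointCongruous Sig) (hmal : SigmaMaltsev Sig)
    {X Y Z : C} (f : X ⟶ Y) (g : Y ⟶ Z)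
    (hgf : SigSpecial Sig (f ≫ g)) (hg : SigSpecial Sig g) :
    SigSpecial Sig f := by
  have hSigObj : ∀ j : WalkingCospan,
      Sig ((cospan (uHom f g) (vHom g)).obj j).p ((cospan (uHom f g) (vHom g)).obj j).s := by
    rintro (_ | _ | _)
    · exact hg
    · exact hgf
    · exact hfib.2 (𝟙 Y) (𝟙 Y) inferInstance (Category.id_comp _)
  have := hpc WalkingCospan inferInstance inferInstance (cospan (uHom f g) (vHom g)) hSigObj
    (PullbackCone.mk (pi1 f g) (pi2 f) (cone_comm f g)) (kerConeIsLimit f g)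
  exact this
end

section
/- Let E be a regular Σ-Mal'tsev category. Then any regular epimorphism in Pt(E) whose domain split epimorphism (f,s) belongs to Σ is a regular pushout: the induced comparison map X → Y ×_{Y'} X' to the pullback is a regular epimorphism. -/
open CategoryTheory CategoryTheory.Limits

universe v u

variable {C : Type u} [Category.{v} C]

section Aux

variable {C : Type u} [Category.{v} C]

/-- A regular epimorphism composed with an isomorphism is a regular epimorphism. -/
noncomputable def regularEpiCompIso {X M P : C} (e : X ⟶ M) (m : M ⟶ P) (he : RegularEpi e)
    [IsIso m] : RegularEpi (e ≫ m) where
  W := he.W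
  left := he.left
  right := he.right
  w := by rw [← Category.assoc, ← Category.assoc, he.w]
  isColimit := by
    refine Cofork.IsColimit.mk _
      (fun sc => inv m ≫ Cofork.IsColimit.desc he.isColimit sc.π sc.condition)
      (fun sc => ?_) (fun sc l hl => ?_)
    · have h := Cofork.IsColimit.π_desc' he.isColimit sc.π sc.condition
      simp only [Cofork.π_ofπ] at h ⊢
      simp only [Category.assoc, IsIso.hom_inv_id_assoc]
      exact h
    · have h := Cofork.IsColimit.π_desc' he.isColimit sc.π sc.condition
      simp only [Cofork.π_ofπ] at h hl
      have hml : m ≫ l = Cofork.IsColimit.desc he.isColimit sc.π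
          sc.condition := by
        haveI := RegularEpi.epi _ he
        rw [← cancel_epi e, ← Category.assoc]
        rw [h]
        simpa [Category.assoc] using hl
      rw [← hml]
      simp

/-- Regular image factorization in a regular category: every morphism factors as a regular
epimorphism followed by a monomorphism. -/
theorem exists_image [HasFiniteLimits C] (hreg : RegularCat C) {X P : C} (φ : X ⟶ P) :
    ∃ (M : C) (e : X ⟶ M) (m : M ⟶ P),
      Nonempty (RegularEpi e) ∧ Mono m ∧ e ≫ m = φ := by
  haveI := hreg.1 φ
  set e := coequalizer.π (pullback.fst φ φ) (pullback.snd φ φ) with he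
  have hre : RegularEpi e := by rw [he]; exact coequalizerRegular _ _
  set m := coequalizer.desc φ pullback.condition with hm
  have hem : e ≫ m = φ := coequalizer.π_desc _ _
  have heq : ∀ ⦃Z : C⦄ (a b : Z ⟶ X), a ≫ φ = b ≫ φ → a ≫ e = b ≫ e := by
    intro Z a b h
    have hcond : pullback.fst φ φ ≫ e = pullback.snd φ φ ≫ e := by
      rw [he]; exact coequalizer.condition _ _
    have h1 : pullback.lift a b h ≫ pullback.fst φ φ ≫ e
        = pullback.lift a b h ≫ pullback.snd φ φ ≫ e := by
      rw [hcond]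
    rw [← Category.assoc, ← Category.assoc, pullback.lift_fst, pullback.lift_snd] at h1
    exact h1
  haveI := hre
  have hmono : Mono m := by
    constructor
    intro Z u v huv
    obtain ⟨re1⟩ := hreg.2 e u (pullback.fst u e) (pullback.snd u e)
      (IsPullback.of_hasPullback u e).flip ⟨hre⟩
    set w := pullback.fst u e with hw
    set a1 := pullback.snd u e with ha1
    obtain ⟨re2⟩ := hreg.2 e (w ≫ v) (pullback.fst (w ≫ v) e) (pullback.snd (w ≫ v) e)
      (IsPullback.of_hasPullback (w ≫ v) e).flip ⟨hre⟩
    set w2 := pullback.fst (w ≫ v) e with hw2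
    set b := pullback.snd (w ≫ v) e with hb
    have c1 : w ≫ u = a1 ≫ e := pullback.condition
    have c2 : w2 ≫ (w ≫ v) = b ≫ e := pullback.condition
    have hphi' : w2 ≫ a1 ≫ e ≫ m = b ≫ e ≫ m := by
      have t1 : w2 ≫ a1 ≫ e ≫ m = w2 ≫ w ≫ u ≫ m := by
        rw [← Category.assoc a1 e, ← c1, Category.assoc]
      have t2 : b ≫ e ≫ m = w2 ≫ w ≫ v ≫ m := by
        rw [← Category.assoc b e, ← c2, Category.assoc, Category.assoc]
      rw [t1, t2, huv]
    simp only [hem] at hphi'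
    have hphi : (w2 ≫ a1) ≫ φ = b ≫ φ := by
      simpa only [Category.assoc] using hphi'
    have he2 : (w2 ≫ a1) ≫ e = b ≫ e := heq _ _ hphi
    have key : w2 ≫ w ≫ u = w2 ≫ w ≫ v := by
      have k1 : w2 ≫ w ≫ u = (w2 ≫ a1) ≫ e := by rw [c1, ← Category.assoc]
      rw [k1, he2, ← c2]
    haveI := RegularEpi.epi _ re1
    haveI := RegularEpi.epi _ re2
    exact (cancel_epi w).1 ((cancel_epi w2).1 key)
  exact ⟨_, e, m, ⟨hre⟩, hmono, hem⟩

end Aux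

/-- In a regular `Σ`-Mal'tsev category, any (levelwise regular epimorphic) morphism of
points whose domain split epimorphism `(f,s)` is in `Σ` is a regular pushout: the
comparison map to the pullback is a regular epimorphism. -/
theorem regular_pushout [HasFiniteLimits C] (hreg : RegularCat C) (Sig : SigClass C)
    (hfib : Fibrational Sig) (hmal : SigmaMaltsev Sig)
    {X Y X' Y' : C} (f : X ⟶ Y) (s : Y ⟶ X) (f' : X' ⟶ Y') (s' : Y' ⟶ X')
    (x : X ⟶ X') (y : Y ⟶ Y')
    (hfs : s ≫ f = 𝟙 Y) (hfs' : s' ≫ f' = 𝟙 Y')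
    (hx : Nonempty (RegularEpi x)) (hy : Nonempty (RegularEpi y))
    (hcomm : f ≫ y = x ≫ f') (hscomm : s ≫ x = y ≫ s')
    (hSig : Sig f s) :
    Nonempty (RegularEpi (pullback.lift f x hcomm : X ⟶ pullback y f')) := by
  classical
  obtain ⟨M, e, m, ⟨re⟩, hmono, hem⟩ :=
    exists_image hreg (pullback.lift f x hcomm : X ⟶ pullback y f')
  haveI := hmono
  haveI := re
  set φ : X ⟶ pullback y f' := pullback.lift f x hcomm with hφdef
  have hφ1 : φ ≫ pullback.fst y f' = f := pullback.lift_fst _ _ _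
  have hφ2 : φ ≫ pullback.snd y f' = x := pullback.lift_snd _ _ _
  -- kernel pair of y
  set π1 := pullback.fst y y with hπ1
  set π2 := pullback.snd y y with hπ2
  have hππ : π1 ≫ y = π2 ≫ y := pullback.condition
  set tdiag : Y ⟶ pullback y y := pullback.lift (𝟙 Y) (𝟙 Y) rfl with htdiag
  have htd1 : tdiag ≫ π1 = 𝟙 Y := pullback.lift_fst _ _ _
  have htd2 : tdiag ≫ π2 = 𝟙 Y := pullback.lift_snd _ _ _
  -- Q = pullback of f along π2
  set gbar := pullback.fst f π2 with hgbar
  set fQ := pullback.snd f π2 with hfQ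
  have hQ : gbar ≫ f = fQ ≫ π2 := pullback.condition
  set s'' : pullback y y ⟶ pullback f π2 :=
    pullback.lift (π2 ≫ s) (𝟙 _) (by rw [Category.assoc, hfs, Category.comp_id, Category.id_comp])
    with hs''def
  have hs''1 : s'' ≫ gbar = π2 ≫ s := pullback.lift_fst _ _ _
  have hs''2 : s'' ≫ fQ = 𝟙 _ := pullback.lift_snd _ _ _
  set tbarQ : X ⟶ pullback f π2 :=
    pullback.lift (𝟙 X) (f ≫ tdiag)
      (by rw [Category.id_comp, Category.assoc, htd2, Category.comp_id]) with htbarQdef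
  have htb1 : tbarQ ≫ gbar = 𝟙 X := pullback.lift_fst _ _ _
  have htb2 : tbarQ ≫ fQ = f ≫ tdiag := pullback.lift_snd _ _ _
  -- the jointly extremally epic pair
  have jee : JointlyExtremallyEpic s'' tbarQ :=
    hmal f s fQ s'' π2 tdiag gbar tbarQ hfs hs''2 htd2 htb1
      (IsPullback.of_hasPullback f π2) hs''1 htb2 hSig
  -- the map r_P : Q → P
  have hrPw : (fQ ≫ π1) ≫ y = (gbar ≫ x) ≫ f' := by
    rw [Category.assoc, hππ, ← Category.assoc, ← hQ, Category.assoc, hcomm, Category.assoc]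
  set rP : pullback f π2 ⟶ pullback y f' := pullback.lift (fQ ≫ π1) (gbar ≫ x) hrPw with hrPdef
  have hrP1 : rP ≫ pullback.fst y f' = fQ ≫ π1 := pullback.lift_fst _ _ _
  have hrP2 : rP ≫ pullback.snd y f' = gbar ≫ x := pullback.lift_snd _ _ _
  -- s ≫ φ over P
  -- s'' ≫ rP = π1 ≫ s ≫ φ
  have hsrP : s'' ≫ rP = π1 ≫ s ≫ φ := by
    apply pullback.hom_ext
    · rw [Category.assoc, hrP1, ← Category.assoc, hs''2, Category.id_comp,
        Category.assoc, Category.assoc, hφ1, hfs, Category.comp_id]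
    · rw [Category.assoc, hrP2, ← Category.assoc, hs''1,
        Category.assoc, Category.assoc, Category.assoc, hφ2, hscomm, ← Category.assoc, ← hππ,
        ← Category.assoc, Category.assoc]
  -- tbarQ ≫ rP = φ
  have htrP : tbarQ ≫ rP = φ := by
    apply pullback.hom_ext
    · rw [Category.assoc, hrP1, ← Category.assoc, htb2, hφ1, Category.assoc, htd1,
        Category.comp_id]
    · rw [Category.assoc, hrP2, ← Category.assoc, htb1, Category.id_comp, hφ2]
  -- the pulled-back subobject n : N → Q
  set n := pullback.fst rP m with hn
  have hnc : n ≫ rP = pullback.snd rP m ≫ m := pullback.condition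
  haveI : Mono n := by rw [hn]; infer_instance
  have ha' : s'' ≫ rP = (π1 ≫ s ≫ e) ≫ m := by
    rw [hsrP, ← hem, Category.assoc, Category.assoc]
  have hb' : tbarQ ≫ rP = e ≫ m := by rw [htrP, hem]
  have hiso : IsIso n :=
    jee n inferInstance (pullback.lift s'' (π1 ≫ s ≫ e) ha')
      (pullback.lift tbarQ e hb') (pullback.lift_fst _ _ _) (pullback.lift_fst _ _ _)
  haveI := hiso
  have hfact : (inv n ≫ pullback.snd rP m) ≫ m = rP := by
    rw [Category.assoc, ← hnc, ← Category.assoc, IsIso.inv_hom_id, Category.id_comp]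
  -- rP is a regular epimorphism: it is a pullback of x
  have hbig : IsPullback (rP ≫ pullback.fst y f') gbar y (x ≫ f') := by
    have h := IsPullback.paste_horiz (IsPullback.of_hasPullback f π2).flip
      (IsPullback.of_hasPullback y y)
    rw [hrP1, ← hcomm]
    exact h
  have hleft : IsPullback rP gbar (pullback.snd y f') x :=
    IsPullback.of_right hbig hrP2 (IsPullback.of_hasPullback y f')
  obtain ⟨rre⟩ := hreg.2 x (pullback.snd y f') rP gbar hleft.flip hx
  haveI := isRegularEpi_of_regularEpi rre
  -- lifting: m is a split epimorphism, hence iso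
  have sq : CommSq (inv n ≫ pullback.snd rP m) rP m (𝟙 (pullback y f')) :=
    ⟨by simpa using hfact⟩
  haveI : HasLiftingProperty rP m := StrongEpi.llp m
  haveI hIsom : IsIso m := by
    refine ⟨sq.lift, ?_, sq.fac_right⟩
    rw [← cancel_mono m]
    simp [sq.fac_right]
  exact ⟨hem ▸ regularEpiCompIso e m re⟩
end

section
/- Let E be a category endowed with a fibrational class Σ of split epimorphisms. If E is Σ-protomodular (every split epimorphism in Σ is strongly split), then E is a Σ-Mal'tsev category; and in a Σ-protomodular category a monomorphism is normal to at most one Σ-equivalence relation. -/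
open CategoryTheory CategoryTheory.Limits

universe v u

variable {C : Type u} [Category.{v} C]

/-- `(f,s)` is a strongly split epimorphism: for every pullback of `(f,s)`, the pair
consisting of the projection and the section `s` is jointly extremally epic. -/
def StronglySplit {X Y : C} (f : X ⟶ Y) (s : Y ⟶ X) : Prop :=
  ∀ ⦃X' Y' : C⦄ (x : X' ⟶ X) (y : Y' ⟶ Y) (f' : X' ⟶ Y') (s' : Y' ⟶ X'),
    IsPullback x f' f y → s' ≫ f' = 𝟙 Y' → s' ≫ x = y ≫ s →
    JointlyExtremallyEpic x s

/-- `C` is `Σ`-protomodular: every split epimorphism in `Σ` is strongly split. -/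
def SigmaProtomodular (Sig : SigClass C) : Prop :=
  ∀ ⦃X Y : C⦄ (f : X ⟶ Y) (s : Y ⟶ X), s ≫ f = 𝟙 Y → Sig f s → StronglySplit f s

/-- `m` is normal to the equivalence relation `S`. -/
def NormalTo [HasFiniteLimits C] {U X : C} (m : U ⟶ X) (S : ReflRel X) : Prop :=
  ∃ mt : (U ⨯ U : C) ⟶ S.R,
    IsPullback mt (prod.fst : (U ⨯ U : C) ⟶ U) S.d0 m ∧
    IsPullback mt (prod.snd : (U ⨯ U : C) ⟶ U) S.d1 m

/-- A `Σ`-protomodular category is a `Σ`-Mal'tsev category, and in it a monomorphism is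
normal to at most one `Σ`-equivalence relation. -/
theorem sigma_protomodular_properties [HasFiniteLimits C] (Sig : SigClass C)
    (hfib : Fibrational Sig) (hpm : SigmaProtomodular Sig) :
    SigmaMaltsev Sig ∧
    ∀ ⦃U X : C⦄ (m : U ⟶ X), Mono m →
      ∀ (S S' : ReflRel X), S.IsEquiv → S'.IsEquiv →
        Sig S.d0 S.s0 → Sig S'.d0 S'.s0 →
        NormalTo m S → NormalTo m S' →
        ∃ φ : S.R ≅ S'.R, φ.hom ≫ S'.d0 = S.d0 ∧ φ.hom ≫ S'.d1 = S.d1 := by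
  constructor
  · -- Σ-Mal'tsev
    intro X Y X' Y' f s f' s' g t gbar tbar hsf hs'f' htg htbargbar hpb hcomm1 hcomm2 hSig
    have hSig' : Sig f' s' := hfib.1 f s f' s' g gbar hpb hsf hs'f' hcomm1 hSig
    have hst : s ≫ tbar = t ≫ s' := by
      apply hpb.hom_ext
      · rw [Category.assoc, Category.assoc, htbargbar, hcomm1, ← Category.assoc, htg,
          Category.comp_id, Category.id_comp]
      · rw [Category.assoc, Category.assoc, hcomm2, hs'f', ← Category.assoc, hsf,
          Category.comp_id, Category.id_comp]
    have hbig : IsPullback (tbar ≫ gbar) f f (t ≫ g) := by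
      rw [htbargbar, htg]; exact IsPullback.of_id_fst
    have hpb2 : IsPullback tbar f f' t := IsPullback.of_right hbig hcomm2 hpb
    have hjee : JointlyExtremallyEpic tbar s' :=
      hpm f' s' hs'f' hSig' tbar t f s hpb2 hsf hst
    intro M mo hmo a' b' ha hb
    exact hjee mo hmo b' a' hb ha
  · -- uniqueness of normality
    intro U X m hm S S' hE hE' hSig hSig' hN hN'
    obtain ⟨mt, hpb0, hpb1⟩ := hN
    obtain ⟨mt', hpb0', hpb1'⟩ := hN'
    have hdiag : (prod.lift (𝟙 U) (𝟙 U)) ≫ mt = m ≫ S.s0 := by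
      apply S.jm
      · rw [Category.assoc, hpb0.w, ← Category.assoc, prod.lift_fst, Category.id_comp,
          Category.assoc, S.r0, Category.comp_id]
      · rw [Category.assoc, hpb1.w, ← Category.assoc, prod.lift_snd, Category.id_comp,
          Category.assoc, S.r1, Category.comp_id]
    have hdiag' : (prod.lift (𝟙 U) (𝟙 U)) ≫ mt' = m ≫ S'.s0 := by
      apply S'.jm
      · rw [Category.assoc, hpb0'.w, ← Category.assoc, prod.lift_fst, Category.id_comp,
          Category.assoc, S'.r0, Category.comp_id]
      · rw [Category.assoc, hpb1'.w, ← Category.assoc, prod.lift_snd, Category.id_comp,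
          Category.assoc, S'.r1, Category.comp_id]
    have hjee : JointlyExtremallyEpic mt S.s0 :=
      hpm S.d0 S.s0 S.r0 hSig mt m prod.fst (prod.lift (𝟙 U) (𝟙 U)) hpb0
        (prod.lift_fst _ _) hdiag
    have hjee' : JointlyExtremallyEpic mt' S'.s0 :=
      hpm S'.d0 S'.s0 S'.r0 hSig' mt' m prod.fst (prod.lift (𝟙 U) (𝟙 U)) hpb0'
        (prod.lift_fst _ _) hdiag'
    -- the intersection T = S ∩ S'
    let e : S.R ⟶ X ⨯ X := prod.lift S.d0 S.d1
    let e' : S'.R ⟶ X ⨯ X := prod.lift S'.d0 S'.d1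
    have monoe : Mono e := ⟨fun a b h => S.jm a b
      (by have := h =≫ prod.fst; simp only [e, Category.assoc] at this; erw [prod.lift_fst] at this; exact this)
      (by have := h =≫ prod.snd; simp only [e, Category.assoc] at this; erw [prod.lift_snd] at this; exact this)⟩
    have monoe' : Mono e' := ⟨fun a b h => S'.jm a b
      (by have := h =≫ prod.fst; simp only [e', Category.assoc] at this; erw [prod.lift_fst] at this; exact this)
      (by have := h =≫ prod.snd; simp only [e', Category.assoc] at this; erw [prod.lift_snd] at this; exact this)⟩
    have monop : Mono (pullback.fst e e') := @pullback.fst_of_mono _ _ _ _ _ e e' _ monoe'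
    have monop' : Mono (pullback.snd e e') := @pullback.snd_of_mono _ _ _ _ _ e e' _ monoe
    have hmte : mt ≫ e = mt' ≫ e' := by
      apply Limits.prod.hom_ext
      · simp only [e, e', Category.assoc, prod.lift_fst]
        rw [hpb0.w, hpb0'.w]
      · simp only [e, e', Category.assoc, prod.lift_snd]
        rw [hpb1.w, hpb1'.w]
    have hs0e : S.s0 ≫ e = S'.s0 ≫ e' := by
      apply Limits.prod.hom_ext
      · simp only [e, e', Category.assoc, prod.lift_fst, S.r0, S'.r0]
      · simp only [e, e', Category.assoc, prod.lift_snd, S.r1, S'.r1]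
    have isop : IsIso (pullback.fst e e') :=
      hjee (pullback.fst e e') monop (pullback.lift mt mt' hmte)
        (pullback.lift S.s0 S'.s0 hs0e) (pullback.lift_fst _ _ _) (pullback.lift_fst _ _ _)
    have isop' : IsIso (pullback.snd e e') :=
      hjee' (pullback.snd e e') monop' (pullback.lift mt mt' hmte)
        (pullback.lift S.s0 S'.s0 hs0e) (pullback.lift_snd _ _ _) (pullback.lift_snd _ _ _)
    have hcond0 : pullback.fst e e' ≫ S.d0 = pullback.snd e e' ≫ S'.d0 := by
      have := pullback.condition (f := e) (g := e') =≫ prod.fst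
      simp only [e, e', Category.assoc] at this; erw [prod.lift_fst, prod.lift_fst] at this; exact this
    have hcond1 : pullback.fst e e' ≫ S.d1 = pullback.snd e e' ≫ S'.d1 := by
      have := pullback.condition (f := e) (g := e') =≫ prod.snd
      simp only [e, e', Category.assoc] at this; erw [prod.lift_snd, prod.lift_snd] at this; exact this
    refine ⟨(@asIso _ _ _ _ _ isop).symm ≪≫ @asIso _ _ _ _ _ isop', ?_, ?_⟩
    · simp only [Iso.trans_hom, Iso.symm_hom, asIso_inv, asIso_hom, Category.assoc]
      rw [← hcond0, IsIso.inv_hom_id_assoc]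
    · simp only [Iso.trans_hom, Iso.symm_hom, asIso_inv, asIso_hom, Category.assoc]
      rw [← hcond1, IsIso.inv_hom_id_assoc]
end
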